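/- Population-level TBRM guarantee (deterministic core of the main theorem): Suppose the MDP is deterministic, let μ be any policy whose step-wise occupancy measures have full support (d_h^μ(s,a) > 0 for all 1 ≤ h ≤ H, s ∈ S_h, a ∈ A), let Q = (Q_h)_{h=1}^H with Q_h : S_h × A → ℝ be arbitrary, and let π̂ := π_Q be its softmax policy. Then for every policy π† (in particular any maximizer π* of J_β over policies), J_β(π†) − J_β(π̂) ≤ 2β · max over π ∈ {π†, π̂} of √( (1 + Σ_{h=1}^H χ²(d_h^π ‖ d_h^μ)) · E_μ[ f_Q(τ)² ] ). -/

import Mathlib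

open Finset

namespace TBRM

/-- `p` is a probability mass function on a finite type. -/
def IsPMF {X : Type*} [Fintype X] (p : X → ℝ) : Prop :=
  (∀ x, 0 ≤ p x) ∧ ∑ x, p x = 1

/-- χ²-divergence between pmfs on a finite type. -/
noncomputable def chiSq {X : Type*} [Fintype X] (p q : X → ℝ) : ℝ :=
  (∑ x, p x ^ 2 / q x) - 1

variable {H : ℕ} {S : Fin (H + 1) → Type*} {A : Type*}
variable [∀ i, Fintype (S i)] [∀ i, DecidableEq (S i)] [Fintype A] [DecidableEq A]

/-- Density of a full trajectory (including the extra final state `s_{H+1}`),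
under initial distribution `ρ`, transition kernels `P`, and policy `π`. -/
noncomputable def trajDensity (ρ : S 0 → ℝ)
    (P : ∀ h : Fin H, S h.castSucc → A → S h.succ → ℝ)
    (π : ∀ h : Fin H, S h.castSucc → A → ℝ)
    (s : ∀ i : Fin (H + 1), S i) (a : Fin H → A) : ℝ :=
  ρ (s 0) * ∏ h : Fin H, (π h (s h.castSucc) (a h) * P h (s h.castSucc) (a h) (s h.succ))

/-- Expectation of a trajectory functional under policy `π`. -/
noncomputable def expTraj (ρ : S 0 → ℝ)
    (P : ∀ h : Fin H, S h.castSucc → A → S h.succ → ℝ)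
    (π : ∀ h : Fin H, S h.castSucc → A → ℝ)
    (f : (∀ i : Fin (H + 1), S i) → (Fin H → A) → ℝ) : ℝ :=
  ∑ s : ∀ i : Fin (H + 1), S i, ∑ a : Fin H → A, trajDensity ρ P π s a * f s a

/-- Step-`h` occupancy measure `d_h^π(x,b)`. -/
noncomputable def occ (ρ : S 0 → ℝ)
    (P : ∀ h : Fin H, S h.castSucc → A → S h.succ → ℝ)
    (π : ∀ h : Fin H, S h.castSucc → A → ℝ)
    (h : Fin H) (x : S h.castSucc) (b : A) : ℝ :=
  expTraj ρ P π (fun s a => if s h.castSucc = x ∧ a h = b then 1 else 0)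


/-- Shifted reward `R_h(s,a) := r_h(s,a)/β + log πref_h(a|s)`. -/
noncomputable def shiftedR (πref : ∀ h : Fin H, S h.castSucc → A → ℝ)
    (r : ∀ h : Fin H, S h.castSucc → A → ℝ) (β : ℝ)
    (h : Fin H) (s : S h.castSucc) (a : A) : ℝ :=
  r h s a / β + Real.log (πref h s a)

/-- The soft value function of `Q`: `V_{Q,h}(s) = log Σ_a exp(Q_h(s,a))` on layers
`1, …, H`, and `V_{Q,H+1} ≡ 0` on the last layer. -/
noncomputable def VQ (Q : ∀ h : Fin H, S h.castSucc → A → ℝ) :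
    ∀ i : Fin (H + 1), S i → ℝ :=
  Fin.lastCases (fun _ => 0)
    (fun h s => Real.log (∑ a : A, Real.exp (Q h s a)))

/-- Point-mass transition kernels of a deterministic MDP. -/
noncomputable def detKernel (Pd : ∀ h : Fin H, S h.castSucc → A → S h.succ) :
    ∀ h : Fin H, S h.castSucc → A → S h.succ → ℝ :=
  fun h s a s' => if s' = Pd h s a then 1 else 0

/-- The soft Bellman optimality operator for deterministic transitions:
`(T_β Q)_h(s,a) := R_h(s,a) + V_{Q,h+1}(P_h(s,a))`. -/
noncomputable def ToptDet (Pd : ∀ h : Fin H, S h.castSucc → A → S h.succ)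
    (πref : ∀ h : Fin H, S h.castSucc → A → ℝ)
    (r : ∀ h : Fin H, S h.castSucc → A → ℝ) (β : ℝ)
    (Q : ∀ h : Fin H, S h.castSucc → A → ℝ)
    (h : Fin H) (s : S h.castSucc) (b : A) : ℝ :=
  shiftedR πref r β h s b + VQ Q h.succ (Pd h s b)

/-- The trajectory Bellman residual
`f_Q(τ) := Q_1(s_1,a_1) − Σ_{h=1}^H R_h(s_h,a_h) + Σ_{h=2}^H (Q_h(s_h,a_h) − V_{Q,h}(s_h))`
of a trajectory `τ = (s_1,a_1,…,s_H,a_H)`. -/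
noncomputable def trajResidual (hH : 0 < H)
    (πref : ∀ h : Fin H, S h.castSucc → A → ℝ)
    (r : ∀ h : Fin H, S h.castSucc → A → ℝ) (β : ℝ)
    (Q : ∀ h : Fin H, S h.castSucc → A → ℝ)
    (s : ∀ h : Fin H, S h.castSucc) (a : Fin H → A) : ℝ :=
  Q ⟨0, hH⟩ (s ⟨0, hH⟩) (a ⟨0, hH⟩)
    - ∑ h : Fin H, shiftedR πref r β h (s h) (a h)
    + ∑ h : Fin H,
        (if h = ⟨0, hH⟩ then 0 else Q h (s h) (a h) - VQ Q h.castSucc (s h))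

/-- KL-regularized return `J_β(π)` relative to a reference policy `πref`. -/
noncomputable def KLret (ρ : S 0 → ℝ)
    (P : ∀ h : Fin H, S h.castSucc → A → S h.succ → ℝ)
    (πref : ∀ h : Fin H, S h.castSucc → A → ℝ)
    (r : ∀ h : Fin H, S h.castSucc → A → ℝ) (β : ℝ)
    (π : ∀ h : Fin H, S h.castSucc → A → ℝ) : ℝ :=
  expTraj ρ P π (fun s a => ∑ h : Fin H,
    (r h (s h.castSucc) (a h)
      - β * Real.log (π h (s h.castSucc) (a h) / πref h (s h.castSucc) (a h))))

/-- The softmax policy of `Q`: `π_{Q,h}(a|s) := exp(Q_h(s,a) − V_{Q,h}(s))`. -/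
noncomputable def softmaxPolicy (Q : ∀ h : Fin H, S h.castSucc → A → ℝ)
    (h : Fin H) (s : S h.castSucc) (a : A) : ℝ :=
  Real.exp (Q h s a - VQ Q h.castSucc s)


/-- The snoc equivalence for non-dependent tuples. -/
def snocEquiv' (A : Type*) (n : ℕ) : (Fin n → A) × A ≃ (Fin (n + 1) → A) where
  toFun p := Fin.snoc p.1 p.2
  invFun f := (fun i => f i.castSucc, f (Fin.last n))
  left_inv p := by
    ext i
    · simp
    · simp
  right_inv f := by
    simp [Fin.snoc_castSucc]
    funext i
    cases i using Fin.lastCases with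
    | last => simp
    | cast j => simp

lemma castSucc_coord {n : ℕ} {A : Type*} (a a' : Fin n → A) (z b : A) (h : Fin n)
    (hag : ∀ k : Fin n, (k : ℕ) ≤ (h : ℕ) → a k = a' k)
    (k : Fin (n+1)) (hk : (k : ℕ) ≤ ((h.castSucc : Fin (n+1)) : ℕ)) :
    (Fin.snoc a b : Fin (n+1) → A) k = (Fin.snoc a' z : Fin (n+1) → A) k := by
  have hk' : (k : ℕ) < n := lt_of_le_of_lt (by simpa using hk) h.isLt
  have hke : k = Fin.castSucc ⟨(k : ℕ), hk'⟩ := by ext; simp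
  rw [hke, Fin.snoc_castSucc, Fin.snoc_castSucc]
  exact hag _ (by simpa using hk)

/-- Chain normalization lemma. -/
lemma chain_sum_eq_one {A : Type*} [Fintype A] [DecidableEq A] [Nonempty A] :
    ∀ (n : ℕ) (c : Fin n → (Fin n → A) → ℝ),
    (∀ (h : Fin n) (a a' : Fin n → A),
        (∀ k : Fin n, (k : ℕ) ≤ (h : ℕ) → a k = a' k) → c h a = c h a') →
    (∀ (h : Fin n) (a : Fin n → A), ∑ b, c h (Function.update a h b) = 1) →
    ∑ a : Fin n → A, ∏ h, c h a = 1 := by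
  intro n
  induction n with
  | zero =>
    intro c _ _
    simp
  | succ n ih =>
    intro c hdep hnorm
    obtain ⟨z⟩ := ‹Nonempty A›
    set c' : Fin n → (Fin n → A) → ℝ :=
      fun h a => c h.castSucc (Fin.snoc a z) with hc'
    have key : ∑ a : Fin (n+1) → A, ∏ h, c h a
        = ∑ a' : Fin n → A, ∑ b : A, ∏ h, c h (Fin.snoc a' b) := by
      rw [← Equiv.sum_comp (snocEquiv' A n)]
      rw [Fintype.sum_prod_type]
      rfl
    rw [key]
    have step : ∀ a' : Fin n → A, ∑ b : A, ∏ h, c h (Fin.snoc a' b)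
        = ∏ h, c' h a' := by
      intro a'
      have : ∀ b : A, ∏ h, c h (Fin.snoc a' b)
          = (∏ h : Fin n, c' h a') * c (Fin.last n) (Fin.snoc a' b) := by
        intro b
        rw [Fin.prod_univ_castSucc]
        congr 1
        refine Finset.prod_congr rfl fun h _ => ?_
        exact hdep h.castSucc _ _ (castSucc_coord a' a' z b h (fun _ _ => rfl))
      simp_rw [this, ← Finset.mul_sum]
      have hb : ∀ b : A, Fin.snoc a' b
          = Function.update (Fin.snoc a' z : Fin (n+1) → A) (Fin.last n) b := by
        intro b; rw [Fin.update_snoc_last]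
      have : ∑ b : A, c (Fin.last n) (Fin.snoc a' b) = 1 := by
        calc ∑ b : A, c (Fin.last n) (Fin.snoc a' b)
            = ∑ b : A, c (Fin.last n)
                (Function.update (Fin.snoc a' z : Fin (n+1) → A) (Fin.last n) b) := by
              refine Finset.sum_congr rfl fun b _ => by rw [hb]
          _ = 1 := hnorm _ _
      rw [this, mul_one]
    simp_rw [step]
    refine ih c' ?_ ?_
    · intro h a a' hag
      exact hdep h.castSucc _ _ (castSucc_coord a a' z z h hag)
    · intro h a
      have : ∀ b, c' h (Function.update a h b)
          = c h.castSucc (Function.update (Fin.snoc a z : Fin (n+1) → A) h.castSucc b) := by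
        intro b
        show c h.castSucc (Fin.snoc (Function.update a h b) z) = _
        rw [Fin.snoc_update]
      simp_rw [this]
      exact hnorm h.castSucc _


/-- Chain conditional-nonpositivity lemma. -/
lemma chain_sum_nonpos {A : Type*} [Fintype A] [DecidableEq A] [Nonempty A] :
    ∀ (n : ℕ) (c : Fin n → (Fin n → A) → ℝ) (g : (Fin n → A) → ℝ) (k : Fin n),
    (∀ h a, 0 ≤ c h a) →
    (∀ (h : Fin n) (a a' : Fin n → A),
        (∀ j : Fin n, (j : ℕ) ≤ (h : ℕ) → a j = a' j) → c h a = c h a') →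
    (∀ (h : Fin n) (a : Fin n → A), ∑ b, c h (Function.update a h b) = 1) →
    (∀ (a a' : Fin n → A), (∀ j : Fin n, (j : ℕ) ≤ (k : ℕ) → a j = a' j) → g a = g a') →
    (∀ a : Fin n → A, ∑ b, c k (Function.update a k b) * g (Function.update a k b) ≤ 0) →
    ∑ a : Fin n → A, (∏ h, c h a) * g a ≤ 0 := by
  intro n
  induction n with
  | zero => intro c g k; exact absurd k.isLt (by omega)
  | succ n ih =>
    intro c g k hc0 hdep hnorm hgdep hcond
    obtain ⟨z⟩ := ‹Nonempty A›
    set c' : Fin n → (Fin n → A) → ℝ :=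
      fun h a => c h.castSucc (Fin.snoc a z) with hc'
    have hb : ∀ (a' : Fin n → A) (b : A), (Fin.snoc a' b : Fin (n+1) → A)
        = Function.update (Fin.snoc a' z : Fin (n+1) → A) (Fin.last n) b := by
      intro a' b; rw [Fin.update_snoc_last]
    have key : ∑ a : Fin (n+1) → A, (∏ h, c h a) * g a
        = ∑ a' : Fin n → A, ∑ b : A, (∏ h, c h (Fin.snoc a' b)) * g (Fin.snoc a' b) := by
      rw [← Equiv.sum_comp (snocEquiv' A n)]
      rw [Fintype.sum_prod_type]
      rfl
    have prodsplit : ∀ (a' : Fin n → A) (b : A), ∏ h, c h (Fin.snoc a' b)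
        = (∏ h : Fin n, c' h a') * c (Fin.last n) (Fin.snoc a' b) := by
      intro a' b
      rw [Fin.prod_univ_castSucc]
      congr 1
      refine Finset.prod_congr rfl fun h _ => ?_
      exact hdep h.castSucc _ _ (castSucc_coord a' a' z b h (fun _ _ => rfl))
    have hc'0 : ∀ h a, 0 ≤ c' h a := fun h a => hc0 _ _
    have hc'dep : ∀ (h : Fin n) (a a' : Fin n → A),
        (∀ j : Fin n, (j : ℕ) ≤ (h : ℕ) → a j = a' j) → c' h a = c' h a' := by
      intro h a a' hag
      exact hdep h.castSucc _ _ (castSucc_coord a a' z z h hag)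
    have hc'norm : ∀ (h : Fin n) (a : Fin n → A), ∑ b, c' h (Function.update a h b) = 1 := by
      intro h a
      have : ∀ b, c' h (Function.update a h b)
          = c h.castSucc (Function.update (Fin.snoc a z : Fin (n+1) → A) h.castSucc b) := by
        intro b
        show c h.castSucc (Fin.snoc (Function.update a h b) z) = _
        rw [Fin.snoc_update]
      simp_rw [this]
      exact hnorm h.castSucc _
    rw [key]
    rcases Fin.eq_castSucc_or_eq_last k with ⟨j, hj⟩ | hlast
    · -- k = castSucc j : inner sum over b factors out, apply IH
      subst hj
      set g' : (Fin n → A) → ℝ := fun a' => g (Fin.snoc a' z) with hg'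
      have hgsnoc : ∀ (a' : Fin n → A) (b : A), g (Fin.snoc a' b) = g' a' := by
        intro a' b
        exact hgdep _ _ (castSucc_coord a' a' z b j (fun _ _ => rfl))
      have inner : ∀ a' : Fin n → A,
          ∑ b : A, (∏ h, c h (Fin.snoc a' b)) * g (Fin.snoc a' b)
          = (∏ h : Fin n, c' h a') * g' a' := by
        intro a'
        calc ∑ b : A, (∏ h, c h (Fin.snoc a' b)) * g (Fin.snoc a' b)
            = ∑ b : A, ((∏ h : Fin n, c' h a') * g' a') * c (Fin.last n) (Fin.snoc a' b) := by
              refine Finset.sum_congr rfl fun b _ => ?_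
              rw [prodsplit, hgsnoc]; ring
          _ = ((∏ h : Fin n, c' h a') * g' a') * ∑ b : A, c (Fin.last n) (Fin.snoc a' b) := by
              rw [← Finset.mul_sum]
          _ = (∏ h : Fin n, c' h a') * g' a' := by
              have : ∑ b : A, c (Fin.last n) (Fin.snoc a' b) = 1 := by
                calc ∑ b : A, c (Fin.last n) (Fin.snoc a' b)
                    = ∑ b : A, c (Fin.last n)
                        (Function.update (Fin.snoc a' z : Fin (n+1) → A) (Fin.last n) b) := by
                      refine Finset.sum_congr rfl fun b _ => by rw [hb]
                  _ = 1 := hnorm _ _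
              rw [this, mul_one]
      simp_rw [inner]
      refine ih c' g' j hc'0 hc'dep hc'norm ?_ ?_
      · intro a a' hag
        exact hgdep _ _ (castSucc_coord a a' z z j hag)
      · intro a
        have upd : ∀ b, (Fin.snoc (Function.update a j b) z : Fin (n+1) → A)
            = Function.update (Fin.snoc a z : Fin (n+1) → A) j.castSucc b := by
          intro b; rw [Fin.snoc_update]
        have : ∀ b, c' j (Function.update a j b) * g' (Function.update a j b)
            = c j.castSucc (Function.update (Fin.snoc a z : Fin (n+1) → A) j.castSucc b)
              * g (Function.update (Fin.snoc a z : Fin (n+1) → A) j.castSucc b) := by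
          intro b
          show c j.castSucc (Fin.snoc (Function.update a j b) z)
              * g (Fin.snoc (Function.update a j b) z) = _
          rw [upd]
        simp_rw [this]
        exact hcond _
    · -- k = last : conditional sum is directly ≤ 0
      subst hlast
      refine Finset.sum_nonpos fun a' _ => ?_
      have inner : ∑ b : A, (∏ h, c h (Fin.snoc a' b)) * g (Fin.snoc a' b)
          = (∏ h : Fin n, c' h a')
            * ∑ b : A, c (Fin.last n) (Fin.snoc a' b) * g (Fin.snoc a' b) := by
        rw [Finset.mul_sum]
        refine Finset.sum_congr rfl fun b _ => ?_
        rw [prodsplit]; ring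
      rw [inner]
      refine mul_nonpos_of_nonneg_of_nonpos (Finset.prod_nonneg fun h _ => hc'0 h a') ?_
      have : ∀ b, c (Fin.last n) (Fin.snoc a' b) * g (Fin.snoc a' b)
          = c (Fin.last n) (Function.update (Fin.snoc a' z : Fin (n+1) → A) (Fin.last n) b)
            * g (Function.update (Fin.snoc a' z : Fin (n+1) → A) (Fin.last n) b) := by
        intro b; rw [← hb]
      simp_rw [this]
      exact hcond _

/-- Equality version. -/
lemma chain_sum_eq_zero {A : Type*} [Fintype A] [DecidableEq A] [Nonempty A]
    (n : ℕ) (c : Fin n → (Fin n → A) → ℝ) (g : (Fin n → A) → ℝ) (k : Fin n)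
    (hc0 : ∀ h a, 0 ≤ c h a)
    (hdep : ∀ (h : Fin n) (a a' : Fin n → A),
        (∀ j : Fin n, (j : ℕ) ≤ (h : ℕ) → a j = a' j) → c h a = c h a')
    (hnorm : ∀ (h : Fin n) (a : Fin n → A), ∑ b, c h (Function.update a h b) = 1)
    (hgdep : ∀ (a a' : Fin n → A), (∀ j : Fin n, (j : ℕ) ≤ (k : ℕ) → a j = a' j) → g a = g a')
    (hcond : ∀ a : Fin n → A,
        ∑ b, c k (Function.update a k b) * g (Function.update a k b) = 0) :
    ∑ a : Fin n → A, (∏ h, c h a) * g a = 0 := by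
  have h1 := chain_sum_nonpos n c g k hc0 hdep hnorm hgdep (fun a => le_of_eq (hcond a))
  have h2 := chain_sum_nonpos n c (fun a => -g a) k hc0 hdep hnorm
    (fun a a' hag => by simp only [neg_inj]; exact hgdep a a' hag)
    (fun a => by
      have := hcond a
      simp only [mul_neg, Finset.sum_neg_distrib, this, neg_zero, le_refl])
  simp only [mul_neg, Finset.sum_neg_distrib, neg_nonpos] at h2
  linarith

/-- Deterministic rollout of the state sequence from `s1` under actions `a`. -/
noncomputable def roll (Pd : ∀ h : Fin H, S h.castSucc → A → S h.succ)
    (s1 : S 0) (a : Fin H → A) : ∀ i : Fin (H + 1), S i :=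
  fun i => Fin.induction s1 (fun h x => Pd h x (a h)) i

@[simp] lemma roll_zero (Pd : ∀ h : Fin H, S h.castSucc → A → S h.succ)
    (s1 : S 0) (a : Fin H → A) : roll Pd s1 a 0 = s1 := rfl

lemma roll_succ (Pd : ∀ h : Fin H, S h.castSucc → A → S h.succ)
    (s1 : S 0) (a : Fin H → A) (h : Fin H) :
    roll Pd s1 a h.succ = Pd h (roll Pd s1 a h.castSucc) (a h) := by
  simp [roll]

lemma roll_dep (Pd : ∀ h : Fin H, S h.castSucc → A → S h.succ)
    (s1 : S 0) (a a' : Fin H → A) (i : Fin (H + 1))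
    (hag : ∀ k : Fin H, (k : ℕ) < (i : ℕ) → a k = a' k) :
    roll Pd s1 a i = roll Pd s1 a' i := by
  induction i using Fin.induction with
  | zero => rfl
  | succ h ih =>
    rw [roll_succ, roll_succ]
    have h1 : roll Pd s1 a h.castSucc = roll Pd s1 a' h.castSucc :=
      ih (fun k hk => hag k (by simp at hk ⊢; omega))
    have h2 : a h = a' h := hag h (by simp)
    rw [h1, h2]

lemma adm_iff (Pd : ∀ h : Fin H, S h.castSucc → A → S h.succ)
    (s : ∀ i : Fin (H + 1), S i) (a : Fin H → A) :
    (∀ h : Fin H, s h.succ = Pd h (s h.castSucc) (a h)) ↔ s = roll Pd (s 0) a := by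
  constructor
  · intro hadm
    funext i
    induction i using Fin.induction with
    | zero => rfl
    | succ h ih => rw [roll_succ, ← ih, hadm]
  · intro hs h
    conv_lhs => rw [hs]
    rw [roll_succ]
    congr 1
    exact (congrFun hs h.castSucc).symm

lemma density_eq (ρ : S 0 → ℝ) (Pd : ∀ h : Fin H, S h.castSucc → A → S h.succ)
    (π : ∀ h : Fin H, S h.castSucc → A → ℝ)
    (s : ∀ i : Fin (H + 1), S i) (a : Fin H → A) :
    trajDensity ρ (detKernel Pd) π s a
      = if s = roll Pd (s 0) a
          then ρ (s 0) * ∏ h : Fin H, π h (s h.castSucc) (a h) else 0 := by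
  unfold trajDensity detKernel
  rw [Finset.prod_mul_distrib, Finset.prod_boole]
  by_cases hs : s = roll Pd (s 0) a
  · rw [if_pos (fun i _ => ((adm_iff Pd s a).mpr hs) i), if_pos hs]; ring
  · rw [if_neg (fun hc => hs ((adm_iff Pd s a).mp (fun h => hc h (Finset.mem_univ h)))),
      if_neg hs]; ring


variable {ρ : S 0 → ℝ} {Pd : ∀ h : Fin H, S h.castSucc → A → S h.succ}
  {π : ∀ h : Fin H, S h.castSucc → A → ℝ}

/-- Reparametrization of a deterministic-MDP expectation through rollouts. -/
lemma exp_reparam (f : (∀ i : Fin (H + 1), S i) → (Fin H → A) → ℝ) :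
    expTraj ρ (detKernel Pd) π f
      = ∑ s1 : S 0, ρ s1 * ∑ a : Fin H → A,
          (∏ h : Fin H, π h (roll Pd s1 a h.castSucc) (a h)) * f (roll Pd s1 a) a := by
  unfold expTraj
  rw [Finset.sum_comm]
  have inner : ∀ a : Fin H → A,
      ∑ s : ∀ i : Fin (H + 1), S i, trajDensity ρ (detKernel Pd) π s a * f s a
        = ∑ s1 : S 0, ρ s1 * ((∏ h : Fin H, π h (roll Pd s1 a h.castSucc) (a h))
            * f (roll Pd s1 a) a) := by
    intro a
    have hre : ∑ s : ∀ i : Fin (H + 1), S i, trajDensity ρ (detKernel Pd) π s a * f s a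
        = ∑ s1 : S 0, ∑ t : ∀ i : Fin H, S i.succ,
            trajDensity ρ (detKernel Pd) π (Fin.cons s1 t) a * f (Fin.cons s1 t) a := by
      rw [← Equiv.sum_comp (Fin.consEquiv S)]
      rw [Fintype.sum_prod_type]
      rfl
    rw [hre]
    refine Finset.sum_congr rfl fun s1 _ => ?_
    have hcons0 : ∀ t : ∀ i : Fin H, S i.succ, (Fin.cons s1 t : ∀ i, S i) 0 = s1 :=
      fun t => rfl
    have key : ∀ t : ∀ i : Fin H, S i.succ,
        trajDensity ρ (detKernel Pd) π (Fin.cons s1 t) a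
          = if t = Fin.tail (roll Pd s1 a)
              then ρ s1 * ∏ h : Fin H, π h ((Fin.cons s1 t : ∀ i, S i) h.castSucc) (a h)
              else 0 := by
      intro t
      rw [density_eq]
      have hiff : (Fin.cons s1 t : ∀ i, S i) = roll Pd ((Fin.cons s1 t : ∀ i, S i) 0) a
          ↔ t = Fin.tail (roll Pd s1 a) := by
        rw [hcons0]
        constructor
        · intro h
          funext i
          have := congrFun h i.succ
          simpa [Fin.tail] using this
        · intro h
          have : roll Pd s1 a = Fin.cons s1 (Fin.tail (roll Pd s1 a)) := by
            have := (Fin.cons_self_tail (roll Pd s1 a)).symm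
            rwa [roll_zero] at this
          rw [this, h]
      by_cases ht : t = Fin.tail (roll Pd s1 a)
      · rw [if_pos (hiff.mpr ht), if_pos ht, hcons0]
      · rw [if_neg (fun hc => ht (hiff.mp hc)), if_neg ht]
    calc ∑ t : ∀ i : Fin H, S i.succ,
          trajDensity ρ (detKernel Pd) π (Fin.cons s1 t) a * f (Fin.cons s1 t) a
        = ∑ t : ∀ i : Fin H, S i.succ,
            (if t = Fin.tail (roll Pd s1 a)
              then (ρ s1 * ∏ h : Fin H, π h ((Fin.cons s1 t : ∀ i, S i) h.castSucc) (a h))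
                * f (Fin.cons s1 t) a
              else 0) := by
          refine Finset.sum_congr rfl fun t _ => ?_
          rw [key t]
          split <;> simp
      _ = (ρ s1 * ∏ h : Fin H, π h
              ((Fin.cons s1 (Fin.tail (roll Pd s1 a)) : ∀ i, S i) h.castSucc) (a h))
            * f (Fin.cons s1 (Fin.tail (roll Pd s1 a))) a := by
          rw [Finset.sum_ite_eq' Finset.univ (Fin.tail (roll Pd s1 a))]
          simp
      _ = ρ s1 * ((∏ h : Fin H, π h (roll Pd s1 a h.castSucc) (a h))
            * f (roll Pd s1 a) a) := by
          have : (Fin.cons s1 (Fin.tail (roll Pd s1 a)) : ∀ i, S i) = roll Pd s1 a := by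
            have := Fin.cons_self_tail (roll Pd s1 a)
            rwa [roll_zero] at this
          rw [this, mul_assoc]
  calc ∑ a : Fin H → A, ∑ s : ∀ i : Fin (H + 1), S i,
        trajDensity ρ (detKernel Pd) π s a * f s a
      = ∑ a : Fin H → A, ∑ s1 : S 0,
          ρ s1 * ((∏ h : Fin H, π h (roll Pd s1 a h.castSucc) (a h)) * f (roll Pd s1 a) a) := by
        exact Finset.sum_congr rfl fun a _ => inner a
    _ = ∑ s1 : S 0, ρ s1 * ∑ a : Fin H → A,
          (∏ h : Fin H, π h (roll Pd s1 a h.castSucc) (a h)) * f (roll Pd s1 a) a := by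
        rw [Finset.sum_comm]
        exact Finset.sum_congr rfl fun s1 _ => by rw [Finset.mul_sum]


section ChainGlue

variable [Nonempty A]

lemma cpol_dep (s1 : S 0) (h : Fin H) (a a' : Fin H → A)
    (hag : ∀ k : Fin H, (k : ℕ) ≤ (h : ℕ) → a k = a' k) :
    π h (roll Pd s1 a h.castSucc) (a h) = π h (roll Pd s1 a' h.castSucc) (a' h) := by
  have h1 : roll Pd s1 a h.castSucc = roll Pd s1 a' h.castSucc :=
    roll_dep Pd s1 a a' h.castSucc (fun k hk => hag k (by simp at hk ⊢; omega))
  rw [h1, hag h le_rfl]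

lemma cpol_norm (hπ : ∀ h s, IsPMF (π h s)) (s1 : S 0) (h : Fin H) (a : Fin H → A) :
    ∑ b : A, π h (roll Pd s1 (Function.update a h b) h.castSucc)
      ((Function.update a h b) h) = 1 := by
  have hroll : ∀ b : A, roll Pd s1 (Function.update a h b) h.castSucc
      = roll Pd s1 a h.castSucc := by
    intro b
    refine roll_dep Pd s1 _ _ h.castSucc fun k hk => ?_
    have : k ≠ h := by simp at hk; exact Fin.ne_of_lt (by omega)
    exact Function.update_of_ne this _ _
  calc ∑ b : A, π h (roll Pd s1 (Function.update a h b) h.castSucc)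
        ((Function.update a h b) h)
      = ∑ b : A, π h (roll Pd s1 a h.castSucc) b := by
        refine Finset.sum_congr rfl fun b _ => ?_
        rw [hroll b, Function.update_self]
    _ = 1 := (hπ h _).2

/-- Normalization of deterministic-MDP trajectory measure. -/
lemma exp_one (hρ : IsPMF ρ) (hπ : ∀ h s, IsPMF (π h s)) :
    expTraj ρ (detKernel Pd) π (fun _ _ => 1) = 1 := by
  rw [exp_reparam]
  have inner : ∀ s1 : S 0, ∑ a : Fin H → A,
      (∏ h : Fin H, π h (roll Pd s1 a h.castSucc) (a h)) = 1 := by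
    intro s1
    exact chain_sum_eq_one H (fun h a => π h (roll Pd s1 a h.castSucc) (a h))
      (fun h a a' hag => cpol_dep s1 h a a' hag)
      (fun h a => cpol_norm hπ s1 h a)
  simp only [mul_one]
  calc ∑ s1 : S 0, ρ s1 * ∑ a : Fin H → A,
        ∏ h : Fin H, π h (roll Pd s1 a h.castSucc) (a h)
      = ∑ s1 : S 0, ρ s1 := Finset.sum_congr rfl fun s1 _ => by rw [inner s1, mul_one]
    _ = 1 := hρ.2

/-- Expectation of a function of the first state. -/
lemma exp_first (hπ : ∀ h s, IsPMF (π h s)) (φ : S 0 → ℝ) :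
    expTraj ρ (detKernel Pd) π (fun s _ => φ (s 0)) = ∑ x : S 0, ρ x * φ x := by
  rw [exp_reparam]
  refine Finset.sum_congr rfl fun s1 _ => ?_
  have inner : ∑ a : Fin H → A,
      (∏ h : Fin H, π h (roll Pd s1 a h.castSucc) (a h)) * φ (roll Pd s1 a 0)
      = φ s1 := by
    calc ∑ a : Fin H → A,
        (∏ h : Fin H, π h (roll Pd s1 a h.castSucc) (a h)) * φ (roll Pd s1 a 0)
        = (∑ a : Fin H → A, ∏ h : Fin H, π h (roll Pd s1 a h.castSucc) (a h)) * φ s1 := by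
          rw [Finset.sum_mul]
          exact Finset.sum_congr rfl fun a _ => by rw [roll_zero]
      _ = φ s1 := by
          rw [chain_sum_eq_one H (fun h a => π h (roll Pd s1 a h.castSucc) (a h))
            (fun h a a' hag => cpol_dep s1 h a a' hag)
            (fun h a => cpol_norm hπ s1 h a), one_mul]
  rw [inner]

/-- Conditional-nonpositivity transfer to trajectory expectations:
`φ(s_0) · ψ(s_k, a_k)` with conditional sums `≤ 0` (`φ ≥ 0`). -/
lemma exp_cond_nonpos (hρ : ∀ x, 0 ≤ ρ x) (hπ : ∀ h s, IsPMF (π h s))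
    (k : Fin H) (φ : S 0 → ℝ) (hφ : ∀ x, 0 ≤ φ x) (ψ : S k.castSucc → A → ℝ)
    (hcond : ∀ x : S k.castSucc, ∑ b : A, π k x b * ψ x b ≤ 0) :
    expTraj ρ (detKernel Pd) π (fun s a => φ (s 0) * ψ (s k.castSucc) (a k)) ≤ 0 := by
  rw [exp_reparam]
  refine Finset.sum_nonpos fun s1 _ => ?_
  refine mul_nonpos_of_nonneg_of_nonpos (hρ s1) ?_
  have : ∀ a : Fin H → A, roll Pd s1 a 0 = s1 := fun a => roll_zero Pd s1 a
  simp only [this]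
  have := chain_sum_nonpos H (fun h a => π h (roll Pd s1 a h.castSucc) (a h))
    (fun a => φ s1 * ψ (roll Pd s1 a k.castSucc) (a k)) k
    (fun h a => (hπ h _).1 _)
    (fun h a a' hag => cpol_dep s1 h a a' hag)
    (fun h a => cpol_norm hπ s1 h a)
    ?_ ?_
  · exact this
  · intro a a' hag
    have h1 : roll Pd s1 a k.castSucc = roll Pd s1 a' k.castSucc :=
      roll_dep Pd s1 a a' k.castSucc (fun j hj => hag j (by simp at hj ⊢; omega))
    show φ s1 * ψ (roll Pd s1 a k.castSucc) (a k)
        = φ s1 * ψ (roll Pd s1 a' k.castSucc) (a' k)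
    rw [h1, hag k le_rfl]
  · intro a
    have hroll : ∀ b : A, roll Pd s1 (Function.update a k b) k.castSucc
        = roll Pd s1 a k.castSucc := by
      intro b
      refine roll_dep Pd s1 _ _ k.castSucc fun j hj => ?_
      have : j ≠ k := by simp at hj; exact Fin.ne_of_lt (by omega)
      exact Function.update_of_ne this _ _
    calc ∑ b : A, π k (roll Pd s1 (Function.update a k b) k.castSucc)
          ((Function.update a k b) k)
          * (φ s1 * ψ (roll Pd s1 (Function.update a k b) k.castSucc)
              ((Function.update a k b) k))
        = φ s1 * ∑ b : A, π k (roll Pd s1 a k.castSucc) b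
            * ψ (roll Pd s1 a k.castSucc) b := by
          rw [Finset.mul_sum]
          refine Finset.sum_congr rfl fun b _ => ?_
          rw [hroll b, Function.update_self]; ring
      _ ≤ 0 := mul_nonpos_of_nonneg_of_nonpos (hφ s1) (hcond _)


lemma roll_update (s1 : S 0) (k : Fin H) (a : Fin H → A) (b : A) :
    roll Pd s1 (Function.update a k b) k.castSucc = roll Pd s1 a k.castSucc := by
  refine roll_dep Pd s1 _ _ k.castSucc fun j hj => ?_
  have : j ≠ k := by simp at hj; exact Fin.ne_of_lt (by omega)
  exact Function.update_of_ne this _ _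

lemma exp_cond_eq_zero₁ (hπ : ∀ h s, IsPMF (π h s))
    (k : Fin H) (φ : S 0 → ℝ) (ψ : S k.castSucc → A → ℝ)
    (hcond : ∀ x : S k.castSucc, ∑ b : A, π k x b * ψ x b = 0) :
    expTraj ρ (detKernel Pd) π (fun s a => φ (s 0) * ψ (s k.castSucc) (a k)) = 0 := by
  rw [exp_reparam]
  refine Finset.sum_eq_zero fun s1 _ => ?_
  have : ∀ a : Fin H → A, roll Pd s1 a 0 = s1 := fun a => roll_zero Pd s1 a
  simp only [this]
  have hz := chain_sum_eq_zero H (fun h a => π h (roll Pd s1 a h.castSucc) (a h))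
    (fun a => φ s1 * ψ (roll Pd s1 a k.castSucc) (a k)) k
    (fun h a => (hπ h _).1 _)
    (fun h a a' hag => cpol_dep s1 h a a' hag)
    (fun h a => cpol_norm hπ s1 h a)
    ?_ ?_
  · rw [hz, mul_zero]
  · intro a a' hag
    have h1 : roll Pd s1 a k.castSucc = roll Pd s1 a' k.castSucc :=
      roll_dep Pd s1 a a' k.castSucc (fun j hj => hag j (by simp at hj ⊢; omega))
    show φ s1 * ψ (roll Pd s1 a k.castSucc) (a k)
        = φ s1 * ψ (roll Pd s1 a' k.castSucc) (a' k)
    rw [h1, hag k le_rfl]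
  · intro a
    calc ∑ b : A, π k (roll Pd s1 (Function.update a k b) k.castSucc)
          ((Function.update a k b) k)
          * (φ s1 * ψ (roll Pd s1 (Function.update a k b) k.castSucc)
              ((Function.update a k b) k))
        = φ s1 * ∑ b : A, π k (roll Pd s1 a k.castSucc) b
            * ψ (roll Pd s1 a k.castSucc) b := by
          rw [Finset.mul_sum]
          refine Finset.sum_congr rfl fun b _ => ?_
          rw [roll_update s1 k a b, Function.update_self]; ring
      _ = 0 := by rw [hcond _, mul_zero]

lemma exp_cond_eq_zero₂ (hπ : ∀ h s, IsPMF (π h s))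
    (h k : Fin H) (hhk : (h : ℕ) < (k : ℕ))
    (ψ₁ : S h.castSucc → A → ℝ) (ψ₂ : S k.castSucc → A → ℝ)
    (hcond : ∀ x : S k.castSucc, ∑ b : A, π k x b * ψ₂ x b = 0) :
    expTraj ρ (detKernel Pd) π
      (fun s a => ψ₁ (s h.castSucc) (a h) * ψ₂ (s k.castSucc) (a k)) = 0 := by
  rw [exp_reparam]
  refine Finset.sum_eq_zero fun s1 _ => ?_
  have hz := chain_sum_eq_zero H (fun j a => π j (roll Pd s1 a j.castSucc) (a j))
    (fun a => ψ₁ (roll Pd s1 a h.castSucc) (a h) * ψ₂ (roll Pd s1 a k.castSucc) (a k)) k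
    (fun j a => (hπ j _).1 _)
    (fun j a a' hag => cpol_dep s1 j a a' hag)
    (fun j a => cpol_norm hπ s1 j a)
    ?_ ?_
  · rw [hz, mul_zero]
  · intro a a' hag
    have h1 : roll Pd s1 a k.castSucc = roll Pd s1 a' k.castSucc :=
      roll_dep Pd s1 a a' k.castSucc (fun j hj => hag j (by simp at hj ⊢; omega))
    have h2 : roll Pd s1 a h.castSucc = roll Pd s1 a' h.castSucc :=
      roll_dep Pd s1 a a' h.castSucc (fun j hj => hag j (by simp at hj ⊢; omega))
    show ψ₁ (roll Pd s1 a h.castSucc) (a h) * ψ₂ (roll Pd s1 a k.castSucc) (a k)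
        = ψ₁ (roll Pd s1 a' h.castSucc) (a' h) * ψ₂ (roll Pd s1 a' k.castSucc) (a' k)
    rw [h1, h2, hag k le_rfl, hag h (le_of_lt hhk)]
  · intro a
    have hne : h ≠ k := Fin.ne_of_lt (by omega)
    have hup : ∀ b : A, roll Pd s1 (Function.update a k b) h.castSucc
        = roll Pd s1 a h.castSucc := by
      intro b
      refine roll_dep Pd s1 _ _ h.castSucc fun j hj => ?_
      have : j ≠ k := by simp at hj; exact Fin.ne_of_lt (by omega)
      exact Function.update_of_ne this _ _
    calc ∑ b : A, π k (roll Pd s1 (Function.update a k b) k.castSucc)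
          ((Function.update a k b) k)
          * (ψ₁ (roll Pd s1 (Function.update a k b) h.castSucc)
              ((Function.update a k b) h)
            * ψ₂ (roll Pd s1 (Function.update a k b) k.castSucc)
              ((Function.update a k b) k))
        = ψ₁ (roll Pd s1 a h.castSucc) (a h)
            * ∑ b : A, π k (roll Pd s1 a k.castSucc) b
                * ψ₂ (roll Pd s1 a k.castSucc) b := by
          rw [Finset.mul_sum]
          refine Finset.sum_congr rfl fun b _ => ?_
          rw [roll_update s1 k a b, hup b, Function.update_self,
            Function.update_of_ne hne]
          ring
      _ = 0 := by rw [hcond _, mul_zero]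

end ChainGlue


section Toolbox

variable {P : ∀ h : Fin H, S h.castSucc → A → S h.succ → ℝ}

lemma exp_congr' {f g : (∀ i : Fin (H + 1), S i) → (Fin H → A) → ℝ}
    (hfg : ∀ s a, trajDensity ρ P π s a ≠ 0 → f s a = g s a) :
    expTraj ρ P π f = expTraj ρ P π g := by
  refine Finset.sum_congr rfl fun s _ => Finset.sum_congr rfl fun a _ => ?_
  by_cases hD : trajDensity ρ P π s a = 0
  · rw [hD, zero_mul, zero_mul]
  · rw [hfg s a hD]

lemma exp_add' (f g : (∀ i : Fin (H + 1), S i) → (Fin H → A) → ℝ) :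
    expTraj ρ P π (fun s a => f s a + g s a)
      = expTraj ρ P π f + expTraj ρ P π g := by
  unfold expTraj
  rw [← Finset.sum_add_distrib]
  refine Finset.sum_congr rfl fun s _ => ?_
  rw [← Finset.sum_add_distrib]
  exact Finset.sum_congr rfl fun a _ => by ring

lemma exp_sub' (f g : (∀ i : Fin (H + 1), S i) → (Fin H → A) → ℝ) :
    expTraj ρ P π (fun s a => f s a - g s a)
      = expTraj ρ P π f - expTraj ρ P π g := by
  unfold expTraj
  rw [← Finset.sum_sub_distrib]
  refine Finset.sum_congr rfl fun s _ => ?_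
  rw [← Finset.sum_sub_distrib]
  exact Finset.sum_congr rfl fun a _ => by ring

lemma exp_cmul' (c : ℝ) (f : (∀ i : Fin (H + 1), S i) → (Fin H → A) → ℝ) :
    expTraj ρ P π (fun s a => c * f s a) = c * expTraj ρ P π f := by
  unfold expTraj
  rw [Finset.mul_sum]
  refine Finset.sum_congr rfl fun s _ => ?_
  rw [Finset.mul_sum]
  exact Finset.sum_congr rfl fun a _ => by ring

lemma exp_sum' {ι : Type*} (t : Finset ι)
    (f : ι → (∀ i : Fin (H + 1), S i) → (Fin H → A) → ℝ) :
    expTraj ρ P π (fun s a => ∑ i ∈ t, f i s a)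
      = ∑ i ∈ t, expTraj ρ P π (f i) := by
  classical
  induction t using Finset.induction with
  | empty => simp [expTraj]
  | insert j t' hnot ih =>
    rw [Finset.sum_insert hnot, ← ih, ← exp_add']
    refine Finset.sum_congr rfl fun s _ => Finset.sum_congr rfl fun a _ => ?_
    simp only []
    rw [Finset.sum_insert hnot]

lemma density_nonneg' (hρ : ∀ x, 0 ≤ ρ x) (hπ : ∀ h s b, 0 ≤ π h s b)
    (hP : ∀ h s b s', 0 ≤ P h s b s') (s : ∀ i : Fin (H + 1), S i) (a : Fin H → A) :
    0 ≤ trajDensity ρ P π s a :=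
  mul_nonneg (hρ _) (Finset.prod_nonneg fun h _ =>
    mul_nonneg (hπ _ _ _) (hP _ _ _ _))

lemma exp_nonneg' (hρ : ∀ x, 0 ≤ ρ x) (hπ : ∀ h s b, 0 ≤ π h s b)
    (hP : ∀ h s b s', 0 ≤ P h s b s')
    (f : (∀ i : Fin (H + 1), S i) → (Fin H → A) → ℝ) (hf : ∀ s a, 0 ≤ f s a) :
    0 ≤ expTraj ρ P π f :=
  Finset.sum_nonneg fun s _ => Finset.sum_nonneg fun a _ =>
    mul_nonneg (density_nonneg' hρ hπ hP s a) (hf s a)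

lemma detKernel_nonneg' (Pd : ∀ h : Fin H, S h.castSucc → A → S h.succ)
    (h : Fin H) (s : S h.castSucc) (b : A) (s' : S h.succ) :
    0 ≤ detKernel Pd h s b s' := by
  unfold detKernel
  split <;> norm_num

/-- Support facts from a nonvanishing density (deterministic kernel). -/
lemma density_support (hπ : ∀ h s b, 0 ≤ π h s b)
    (s : ∀ i : Fin (H + 1), S i) (a : Fin H → A)
    (hD : trajDensity ρ (detKernel Pd) π s a ≠ 0) :
    (∀ h : Fin H, s h.succ = Pd h (s h.castSucc) (a h))
      ∧ (∀ h : Fin H, 0 < π h (s h.castSucc) (a h)) := by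
  rw [density_eq] at hD
  by_cases hs : s = roll Pd (s 0) a
  · rw [if_pos hs] at hD
    have hprod : ∏ h : Fin H, π h (s h.castSucc) (a h) ≠ 0 := fun hc => hD (by rw [hc]; ring)
    rw [Finset.prod_ne_zero_iff] at hprod
    exact ⟨(adm_iff Pd s a).mpr hs,
      fun h => lt_of_le_of_ne (hπ _ _ _) (Ne.symm (hprod h (Finset.mem_univ h)))⟩
  · rw [if_neg hs] at hD
    exact absurd rfl hD

lemma sum_ite_pair {X Y : Type*} [Fintype X] [Fintype Y] [DecidableEq X] [DecidableEq Y]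
    (x0 : X) (y0 : Y) (ψ : X → Y → ℝ) :
    ∑ x : X, ∑ y : Y, (if x0 = x ∧ y0 = y then ψ x y else 0) = ψ x0 y0 := by
  rw [Finset.sum_eq_single x0]
  · rw [Finset.sum_eq_single y0]
    · rw [if_pos ⟨rfl, rfl⟩]
    · intro y _ hy
      rw [if_neg (fun hc => hy hc.2.symm)]
    · intro hx; exact absurd (Finset.mem_univ y0) hx
  · intro x _ hx
    exact Finset.sum_eq_zero fun y _ => if_neg (fun hc => hx hc.1.symm)
  · intro hx; exact absurd (Finset.mem_univ x0) hx

lemma sum_swap4 {α β γ δ : Type*} [Fintype α] [Fintype β] [Fintype γ] [Fintype δ]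
    (F : α → β → γ → δ → ℝ) :
    (∑ s : α, ∑ a : β, ∑ x : γ, ∑ b : δ, F s a x b)
      = ∑ x : γ, ∑ b : δ, ∑ s : α, ∑ a : β, F s a x b := by
  calc (∑ s : α, ∑ a : β, ∑ x : γ, ∑ b : δ, F s a x b)
      = ∑ s : α, ∑ x : γ, ∑ a : β, ∑ b : δ, F s a x b :=
        Finset.sum_congr rfl fun s _ => Finset.sum_comm
    _ = ∑ x : γ, ∑ s : α, ∑ a : β, ∑ b : δ, F s a x b := Finset.sum_comm
    _ = ∑ x : γ, ∑ s : α, ∑ b : δ, ∑ a : β, F s a x b :=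
        Finset.sum_congr rfl fun x _ => Finset.sum_congr rfl fun s _ =>
          Finset.sum_comm
    _ = ∑ x : γ, ∑ b : δ, ∑ s : α, ∑ a : β, F s a x b :=
        Finset.sum_congr rfl fun x _ => Finset.sum_comm

/-- Pairing with the occupancy measure computes step marginals. -/
lemma occ_pair (k : Fin H) (ψ : S k.castSucc → A → ℝ) :
    ∑ x : S k.castSucc × A, occ ρ P π k x.1 x.2 * ψ x.1 x.2
      = expTraj ρ P π (fun s a => ψ (s k.castSucc) (a k)) := by
  rw [Fintype.sum_prod_type]
  unfold occ expTraj
  calc ∑ x : S k.castSucc, ∑ b : A,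
        (∑ s : ∀ i : Fin (H + 1), S i, ∑ a : Fin H → A,
          trajDensity ρ P π s a * (if s k.castSucc = x ∧ a k = b then 1 else 0)) * ψ x b
      = ∑ x : S k.castSucc, ∑ b : A, ∑ s : ∀ i : Fin (H + 1), S i, ∑ a : Fin H → A,
          trajDensity ρ P π s a * (if s k.castSucc = x ∧ a k = b then ψ x b else 0) := by
        refine Finset.sum_congr rfl fun x _ => Finset.sum_congr rfl fun b _ => ?_
        rw [Finset.sum_mul]
        refine Finset.sum_congr rfl fun s _ => ?_
        rw [Finset.sum_mul]
        refine Finset.sum_congr rfl fun a _ => ?_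
        split <;> ring
    _ = ∑ s : ∀ i : Fin (H + 1), S i, ∑ a : Fin H → A,
          ∑ x : S k.castSucc, ∑ b : A,
            trajDensity ρ P π s a * (if s k.castSucc = x ∧ a k = b then ψ x b else 0) :=
        (sum_swap4 _).symm
    _ = ∑ s : ∀ i : Fin (H + 1), S i, ∑ a : Fin H → A,
          trajDensity ρ P π s a * ψ (s k.castSucc) (a k) := by
        refine Finset.sum_congr rfl fun s _ => Finset.sum_congr rfl fun a _ => ?_
        have : ∀ x : S k.castSucc, (∑ b : A, trajDensity ρ P π s a
            * if s k.castSucc = x ∧ a k = b then ψ x b else 0)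
            = trajDensity ρ P π s a
              * ∑ b : A, if s k.castSucc = x ∧ a k = b then ψ x b else 0 := by
          intro x; rw [Finset.mul_sum]
        simp_rw [this]
        rw [← Finset.mul_sum]
        rw [show (∑ x : S k.castSucc, ∑ b : A,
            if s k.castSucc = x ∧ a k = b then ψ x b else 0) = ψ (s k.castSucc) (a k)
          from sum_ite_pair _ _ _]

end Toolbox


section TBRMCore

variable {Q : ∀ h : Fin H, S h.castSucc → A → ℝ}

@[simp] lemma VQ_last (s : S (Fin.last H)) : VQ Q (Fin.last H) s = 0 := by
  unfold VQ
  rw [Fin.lastCases_last]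

lemma VQ_castSucc (h : Fin H) (s : S h.castSucc) :
    VQ Q h.castSucc s = Real.log (∑ a : A, Real.exp (Q h s a)) := by
  unfold VQ
  rw [Fin.lastCases_castSucc]

lemma softmax_pos (h : Fin H) (s : S h.castSucc) (a : A) :
    0 < softmaxPolicy Q h s a := Real.exp_pos _

lemma log_softmax (h : Fin H) (s : S h.castSucc) (a : A) :
    Real.log (softmaxPolicy Q h s a) = Q h s a - VQ Q h.castSucc s :=
  Real.log_exp _

lemma softmax_pmf [Nonempty A] (h : Fin H) (s : S h.castSucc) :
    IsPMF (softmaxPolicy Q h s) := by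
  constructor
  · intro a; exact le_of_lt (softmax_pos h s a)
  · have hS : 0 < ∑ a : A, Real.exp (Q h s a) :=
      Finset.sum_pos (fun a _ => Real.exp_pos _) Finset.univ_nonempty
    unfold softmaxPolicy
    rw [VQ_castSucc]
    calc ∑ a : A, Real.exp (Q h s a - Real.log (∑ b : A, Real.exp (Q h s b)))
        = ∑ a : A, Real.exp (Q h s a) / (∑ b : A, Real.exp (Q h s b)) := by
          refine Finset.sum_congr rfl fun a _ => ?_
          rw [Real.exp_sub, Real.exp_log hS]
      _ = 1 := by
          rw [← Finset.sum_div, div_self (ne_of_gt hS)]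

variable {πref r : ∀ h : Fin H, S h.castSucc → A → ℝ} {β : ℝ}
variable {μ : ∀ h : Fin H, S h.castSucc → A → ℝ}

/-- One-step Bellman residual. -/
noncomputable def dlt (Pd : ∀ h : Fin H, S h.castSucc → A → S h.succ)
    (πref r : ∀ h : Fin H, S h.castSucc → A → ℝ) (β : ℝ)
    (Q : ∀ h : Fin H, S h.castSucc → A → ℝ) (h : Fin H) (x : S h.castSucc) (b : A) : ℝ :=
  Q h x b - (shiftedR πref r β h x b + VQ Q h.succ (Pd h x b))

/-- Residual-to-go value function under `μ`. -/
noncomputable def Wfun (Pd : ∀ h : Fin H, S h.castSucc → A → S h.succ)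
    (πref r : ∀ h : Fin H, S h.castSucc → A → ℝ) (β : ℝ)
    (Q μ : ∀ h : Fin H, S h.castSucc → A → ℝ) : ∀ i : Fin (H + 1), S i → ℝ :=
  Fin.reverseInduction (fun _ => 0)
    (fun h w x => ∑ b : A, μ h x b * (dlt Pd πref r β Q h x b + w (Pd h x b)))

@[simp] lemma Wfun_last (x : S (Fin.last H)) : Wfun Pd πref r β Q μ (Fin.last H) x = 0 := by
  unfold Wfun
  rw [Fin.reverseInduction_last]

lemma Wfun_castSucc (h : Fin H) (x : S h.castSucc) :
    Wfun Pd πref r β Q μ h.castSucc x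
      = ∑ b : A, μ h x b
          * (dlt Pd πref r β Q h x b + Wfun Pd πref r β Q μ h.succ (Pd h x b)) := by
  unfold Wfun
  rw [Fin.reverseInduction_castSucc]

/-- Martingale increment. -/
noncomputable def Afun (Pd : ∀ h : Fin H, S h.castSucc → A → S h.succ)
    (πref r : ∀ h : Fin H, S h.castSucc → A → ℝ) (β : ℝ)
    (Q μ : ∀ h : Fin H, S h.castSucc → A → ℝ) (h : Fin H) (x : S h.castSucc) (b : A) : ℝ :=
  dlt Pd πref r β Q h x b + Wfun Pd πref r β Q μ h.succ (Pd h x b)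
    - Wfun Pd πref r β Q μ h.castSucc x

lemma Afun_mean (hμ : ∀ h s, IsPMF (μ h s)) (h : Fin H) (x : S h.castSucc) :
    ∑ b : A, μ h x b * Afun Pd πref r β Q μ h x b = 0 := by
  unfold Afun
  calc ∑ b : A, μ h x b
        * (dlt Pd πref r β Q h x b + Wfun Pd πref r β Q μ h.succ (Pd h x b)
          - Wfun Pd πref r β Q μ h.castSucc x)
      = (∑ b : A, μ h x b
          * (dlt Pd πref r β Q h x b + Wfun Pd πref r β Q μ h.succ (Pd h x b)))
        - (∑ b : A, μ h x b) * Wfun Pd πref r β Q μ h.castSucc x := by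
        rw [Finset.sum_mul, ← Finset.sum_sub_distrib]
        exact Finset.sum_congr rfl fun b _ => by ring
    _ = 0 := by
        rw [← Wfun_castSucc, (hμ h x).2, one_mul, sub_self]


lemma sum_ite_z (z : Fin H) (X : Fin H → ℝ) :
    ∑ h : Fin H, (if h = z then (0:ℝ) else X h) = (∑ h : Fin H, X h) - X z := by
  have h1 : ∑ h : Fin H, (if h = z then (0:ℝ) else X h)
      = ∑ h : Fin H, (X h - if h = z then X h else 0) := by
    refine Finset.sum_congr rfl fun h _ => ?_
    split <;> ring
  rw [h1, Finset.sum_sub_distrib, Finset.sum_ite_eq' Finset.univ z X,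
    if_pos (Finset.mem_univ z)]

lemma telescope (G : Fin (H + 1) → ℝ) :
    ∑ h : Fin H, (G h.succ - G h.castSucc) = G (Fin.last H) - G 0 := by
  have h1 : ∑ i : Fin (H + 1), G i = G 0 + ∑ h : Fin H, G h.succ := Fin.sum_univ_succ G
  have h2 : ∑ i : Fin (H + 1), G i = (∑ h : Fin H, G h.castSucc) + G (Fin.last H) :=
    Fin.sum_univ_castSucc G
  rw [Finset.sum_sub_distrib]
  linarith

/-- The "softmax-logarithm" form of the trajectory residual: no admissibility needed. -/
lemma trajRes_L (hH : 0 < H) (s : ∀ i : Fin (H + 1), S i) (a : Fin H → A) :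
    trajResidual hH πref r β Q (fun h => s h.castSucc) a
      = VQ Q 0 (s 0)
        + (∑ h : Fin H, (Q h (s h.castSucc) (a h) - VQ Q h.castSucc (s h.castSucc)))
        - ∑ h : Fin H, shiftedR πref r β h (s h.castSucc) (a h) := by
  unfold trajResidual
  rw [sum_ite_z (⟨0, hH⟩ : Fin H)
    (fun h => Q h (s h.castSucc) (a h) - VQ Q h.castSucc (s h.castSucc))]
  have hz : VQ Q (⟨0, hH⟩ : Fin H).castSucc (s (⟨0, hH⟩ : Fin H).castSucc)
      = VQ Q 0 (s 0) := rfl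
  simp only []
  linarith [hz]

/-- On admissible trajectories the residual is the sum of one-step residuals. -/
lemma trajRes_delta (hH : 0 < H) (s : ∀ i : Fin (H + 1), S i) (a : Fin H → A)
    (adm : ∀ h : Fin H, s h.succ = Pd h (s h.castSucc) (a h)) :
    trajResidual hH πref r β Q (fun h => s h.castSucc) a
      = ∑ h : Fin H, dlt Pd πref r β Q h (s h.castSucc) (a h) := by
  rw [trajRes_L hH s a]
  unfold dlt
  have h1 : ∀ h : Fin H, VQ Q h.succ (Pd h (s h.castSucc) (a h))
      = VQ Q h.succ (s h.succ) := fun h => by rw [← adm h]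
  have h2 : ∑ h : Fin H,
      (Q h (s h.castSucc) (a h)
        - (shiftedR πref r β h (s h.castSucc) (a h) + VQ Q h.succ (Pd h (s h.castSucc) (a h))))
      = ∑ h : Fin H, (Q h (s h.castSucc) (a h) - shiftedR πref r β h (s h.castSucc) (a h)
          - VQ Q h.succ (s h.succ)) := by
    refine Finset.sum_congr rfl fun h _ => ?_
    rw [h1 h]; ring
  rw [h2]
  have h3 : ∑ h : Fin H, (VQ Q h.succ (s h.succ) - VQ Q h.castSucc (s h.castSucc))
      = VQ Q (Fin.last H) (s (Fin.last H)) - VQ Q 0 (s 0) :=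
    telescope (fun i => VQ Q i (s i))
  rw [VQ_last] at h3
  have d1 : ∑ h : Fin H, (Q h (s h.castSucc) (a h) - shiftedR πref r β h (s h.castSucc) (a h)
      - VQ Q h.succ (s h.succ))
      = (∑ h : Fin H, Q h (s h.castSucc) (a h))
        - (∑ h : Fin H, shiftedR πref r β h (s h.castSucc) (a h))
        - ∑ h : Fin H, VQ Q h.succ (s h.succ) := by
    rw [Finset.sum_sub_distrib, Finset.sum_sub_distrib]
  have h4 : ∑ h : Fin H, (Q h (s h.castSucc) (a h) - VQ Q h.castSucc (s h.castSucc))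
      = (∑ h : Fin H, Q h (s h.castSucc) (a h))
        - ∑ h : Fin H, VQ Q h.castSucc (s h.castSucc) := Finset.sum_sub_distrib _ _
  have h5 : ∑ h : Fin H, (VQ Q h.succ (s h.succ) - VQ Q h.castSucc (s h.castSucc))
      = (∑ h : Fin H, VQ Q h.succ (s h.succ))
        - ∑ h : Fin H, VQ Q h.castSucc (s h.castSucc) := Finset.sum_sub_distrib _ _
  linarith [h3, h4, h5, d1]

/-- Martingale decomposition of the trajectory residual, on admissible trajectories. -/
lemma trajRes_WA (hH : 0 < H) (s : ∀ i : Fin (H + 1), S i) (a : Fin H → A)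
    (adm : ∀ h : Fin H, s h.succ = Pd h (s h.castSucc) (a h)) :
    trajResidual hH πref r β Q (fun h => s h.castSucc) a
      = Wfun Pd πref r β Q μ 0 (s 0)
        + ∑ h : Fin H, Afun Pd πref r β Q μ h (s h.castSucc) (a h) := by
  rw [trajRes_delta hH s a adm]
  unfold Afun
  have h1 : ∀ h : Fin H, Wfun Pd πref r β Q μ h.succ (Pd h (s h.castSucc) (a h))
      = Wfun Pd πref r β Q μ h.succ (s h.succ) := fun h => by rw [← adm h]
  have h2 : ∑ h : Fin H, (dlt Pd πref r β Q h (s h.castSucc) (a h)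
        + Wfun Pd πref r β Q μ h.succ (Pd h (s h.castSucc) (a h))
        - Wfun Pd πref r β Q μ h.castSucc (s h.castSucc))
      = (∑ h : Fin H, dlt Pd πref r β Q h (s h.castSucc) (a h))
        + ∑ h : Fin H, (Wfun Pd πref r β Q μ h.succ (s h.succ)
            - Wfun Pd πref r β Q μ h.castSucc (s h.castSucc)) := by
    rw [← Finset.sum_add_distrib]
    refine Finset.sum_congr rfl fun h _ => ?_
    rw [h1 h]; ring
  rw [h2, telescope (fun i => Wfun Pd πref r β Q μ i (s i)), Wfun_last]
  ring


lemma gibbs {B : Type*} [Fintype B] (p q : B → ℝ) (hp : IsPMF p)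
    (hq0 : ∀ b, 0 < q b) (hq1 : ∑ b, q b = 1) :
    ∑ b, p b * (Real.log (q b) - Real.log (p b)) ≤ 0 := by
  have hterm : ∀ b, p b * (Real.log (q b) - Real.log (p b)) ≤ q b - p b := by
    intro b
    rcases eq_or_lt_of_le (hp.1 b) with h0 | hpos
    · rw [← h0]
      simp
      exact le_of_lt (hq0 b)
    · have hlogd : Real.log (q b) - Real.log (p b) = Real.log (q b / p b) :=
        (Real.log_div (ne_of_gt (hq0 b)) (ne_of_gt hpos)).symm
      rw [hlogd]
      have hlog : Real.log (q b / p b) ≤ q b / p b - 1 :=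
        Real.log_le_sub_one_of_pos (div_pos (hq0 b) hpos)
      calc p b * Real.log (q b / p b) ≤ p b * (q b / p b - 1) := by nlinarith
        _ = q b - p b := by field_simp
  calc ∑ b, p b * (Real.log (q b) - Real.log (p b)) ≤ ∑ b, (q b - p b) :=
        Finset.sum_le_sum fun b _ => hterm b
    _ = 0 := by rw [Finset.sum_sub_distrib, hq1, hp.2, sub_self]

section Step1

variable [Nonempty A]

/-- Key exact identity behind the performance bound. -/
lemma step1_key (hH : 0 < H) (hβ : 0 < β)
    (hπrefpos : ∀ h s a, 0 < πref h s a)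
    (π : ∀ h : Fin H, S h.castSucc → A → ℝ) (hπ : ∀ h s, IsPMF (π h s)) :
    KLret ρ (detKernel Pd) πref r β π
        + β * expTraj ρ (detKernel Pd) π
            (fun s a => trajResidual hH πref r β Q (fun h => s h.castSucc) a)
        - β * (∑ x : S 0, ρ x * VQ Q 0 x)
      = expTraj ρ (detKernel Pd) π (fun s a => β * ∑ h : Fin H,
          ((Q h (s h.castSucc) (a h) - VQ Q h.castSucc (s h.castSucc))
            - Real.log (π h (s h.castSucc) (a h)))) := by
  have hV : β * (∑ x : S 0, ρ x * VQ Q 0 x)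
      = expTraj ρ (detKernel Pd) π (fun s a => β * VQ Q 0 (s 0)) := by
    rw [exp_cmul', exp_first hπ (VQ Q 0)]
  rw [hV]
  rw [show KLret ρ (detKernel Pd) πref r β π
      = expTraj ρ (detKernel Pd) π (fun s a => ∑ h : Fin H,
          (r h (s h.castSucc) (a h)
            - β * Real.log (π h (s h.castSucc) (a h) / πref h (s h.castSucc) (a h))))
      from rfl]
  rw [← exp_cmul' β, ← exp_add', ← exp_sub']
  refine exp_congr' fun s a hD => ?_
  obtain ⟨adm, hpos⟩ := density_support (fun h x b => (hπ h x).1 b) s a hD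
  rw [trajRes_L hH s a]
  have hg1 : ∑ h : Fin H, (r h (s h.castSucc) (a h)
      - β * Real.log (π h (s h.castSucc) (a h) / πref h (s h.castSucc) (a h)))
      = β * ((∑ h : Fin H, shiftedR πref r β h (s h.castSucc) (a h))
          - ∑ h : Fin H, Real.log (π h (s h.castSucc) (a h))) := by
    rw [mul_sub, Finset.mul_sum, Finset.mul_sum, ← Finset.sum_sub_distrib]
    refine Finset.sum_congr rfl fun h _ => ?_
    unfold shiftedR
    rw [Real.log_div (ne_of_gt (hpos h)) (ne_of_gt (hπrefpos h _ (a h)))]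
    field_simp
    ring
  rw [hg1]
  have hsplit : ∑ h : Fin H,
      ((Q h (s h.castSucc) (a h) - VQ Q h.castSucc (s h.castSucc))
        - Real.log (π h (s h.castSucc) (a h)))
      = (∑ h : Fin H, (Q h (s h.castSucc) (a h) - VQ Q h.castSucc (s h.castSucc)))
        - ∑ h : Fin H, Real.log (π h (s h.castSucc) (a h)) := Finset.sum_sub_distrib _ _
  rw [hsplit]
  ring

/-- Step 1, inequality form: `J_β(π) ≤ β (E_ρ[V_{Q,1}] - E_π[f_Q])`. -/
lemma step1_le (hH : 0 < H) (hρ : IsPMF ρ) (hβ : 0 < β)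
    (hπrefpos : ∀ h s a, 0 < πref h s a)
    (π : ∀ h : Fin H, S h.castSucc → A → ℝ) (hπ : ∀ h s, IsPMF (π h s)) :
    KLret ρ (detKernel Pd) πref r β π
      ≤ β * ((∑ x : S 0, ρ x * VQ Q 0 x)
          - expTraj ρ (detKernel Pd) π
              (fun s a => trajResidual hH πref r β Q (fun h => s h.castSucc) a)) := by
  have hkey := step1_key (ρ := ρ) (Pd := Pd) (Q := Q) (r := r) hH hβ hπrefpos π hπ
  have hle : expTraj ρ (detKernel Pd) π (fun s a => β * ∑ h : Fin H,
      ((Q h (s h.castSucc) (a h) - VQ Q h.castSucc (s h.castSucc))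
        - Real.log (π h (s h.castSucc) (a h)))) ≤ 0 := by
    rw [exp_cmul']
    refine mul_nonpos_of_nonneg_of_nonpos (le_of_lt hβ) ?_
    rw [exp_sum' Finset.univ (fun h s a =>
      (Q h (s h.castSucc) (a h) - VQ Q h.castSucc (s h.castSucc))
        - Real.log (π h (s h.castSucc) (a h)))]
    refine Finset.sum_nonpos fun h _ => ?_
    have := exp_cond_nonpos (ρ := ρ) (Pd := Pd) (π := π) hρ.1 hπ h
      (fun _ => 1) (fun _ => zero_le_one)
      (fun x b => (Q h x b - VQ Q h.castSucc x) - Real.log (π h x b)) ?_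
    · calc expTraj ρ (detKernel Pd) π (fun s a =>
            (Q h (s h.castSucc) (a h) - VQ Q h.castSucc (s h.castSucc))
              - Real.log (π h (s h.castSucc) (a h)))
          = expTraj ρ (detKernel Pd) π (fun s a => (1:ℝ) *
              ((Q h (s h.castSucc) (a h) - VQ Q h.castSucc (s h.castSucc))
                - Real.log (π h (s h.castSucc) (a h)))) := by
            refine exp_congr' fun s a _ => by ring
        _ ≤ 0 := this
    · intro x
      have hsm := softmax_pmf (Q := Q) h x
      have hg := gibbs (π h x) (softmaxPolicy Q h x) (hπ h x)
        (fun b => softmax_pos h x b) hsm.2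
      calc ∑ b, π h x b * ((Q h x b - VQ Q h.castSucc x) - Real.log (π h x b))
          = ∑ b, π h x b * (Real.log (softmaxPolicy Q h x b) - Real.log (π h x b)) := by
            refine Finset.sum_congr rfl fun b _ => by rw [log_softmax]
        _ ≤ 0 := hg
  linarith

/-- Step 1, equality form for the softmax policy. -/
lemma step1_eq (hH : 0 < H) (hβ : 0 < β)
    (hπrefpos : ∀ h s a, 0 < πref h s a) :
    KLret ρ (detKernel Pd) πref r β (softmaxPolicy Q)
      = β * ((∑ x : S 0, ρ x * VQ Q 0 x)
          - expTraj ρ (detKernel Pd) (softmaxPolicy Q)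
              (fun s a => trajResidual hH πref r β Q (fun h => s h.castSucc) a)) := by
  have hkey := step1_key (ρ := ρ) (Pd := Pd) (Q := Q) (r := r) hH hβ hπrefpos
    (softmaxPolicy Q) (fun h x => softmax_pmf h x)
  have hzero : expTraj ρ (detKernel Pd) (softmaxPolicy Q) (fun s a => β * ∑ h : Fin H,
      ((Q h (s h.castSucc) (a h) - VQ Q h.castSucc (s h.castSucc))
        - Real.log (softmaxPolicy Q h (s h.castSucc) (a h)))) = 0 := by
    have : ∀ (s : ∀ i : Fin (H+1), S i) (a : Fin H → A), (β * ∑ h : Fin H,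
        ((Q h (s h.castSucc) (a h) - VQ Q h.castSucc (s h.castSucc))
          - Real.log (softmaxPolicy Q h (s h.castSucc) (a h)))) = 0 := by
      intro s a
      have : ∀ h : Fin H,
          (Q h (s h.castSucc) (a h) - VQ Q h.castSucc (s h.castSucc))
            - Real.log (softmaxPolicy Q h (s h.castSucc) (a h)) = 0 := by
        intro h; rw [log_softmax]; ring
      rw [Finset.sum_congr rfl fun h _ => this h]
      simp
    calc expTraj ρ (detKernel Pd) (softmaxPolicy Q) _
        = expTraj ρ (detKernel Pd) (softmaxPolicy Q) (fun _ _ => 0) :=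
          exp_congr' fun s a _ => this s a
      _ = 0 := by
          unfold expTraj
          simp
  rw [hzero] at hkey
  linarith

end Step1


lemma chiSq_eq {X : Type*} [Fintype X] (p q : X → ℝ) (hq : ∀ x, 0 < q x)
    (hp1 : ∑ x, p x = 1) (hq1 : ∑ x, q x = 1) :
    chiSq p q = ∑ x, (p x - q x) ^ 2 / q x := by
  unfold chiSq
  have hterm : ∀ x, (p x - q x) ^ 2 / q x = p x ^ 2 / q x - 2 * p x + q x := by
    intro x
    field_simp [ne_of_gt (hq x)]
    ring
  rw [Finset.sum_congr rfl fun x _ => hterm x]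
  rw [Finset.sum_add_distrib, Finset.sum_sub_distrib, ← Finset.mul_sum, hp1, hq1]
  ring

lemma chiSq_nonneg {X : Type*} [Fintype X] (p q : X → ℝ) (hq : ∀ x, 0 < q x)
    (hp1 : ∑ x, p x = 1) (hq1 : ∑ x, q x = 1) : 0 ≤ chiSq p q := by
  rw [chiSq_eq p q hq hp1 hq1]
  exact Finset.sum_nonneg fun x _ => div_nonneg (sq_nonneg _) (le_of_lt (hq x))

/-- Weighted Cauchy–Schwarz. -/
lemma cs_weighted {X : Type*} [Fintype X] (u v w : X → ℝ) (hw : ∀ x, 0 < w x) :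
    |∑ x, u x * v x|
      ≤ Real.sqrt (∑ x, u x ^ 2 / w x) * Real.sqrt (∑ x, w x * v x ^ 2) := by
  have hsq : ∀ x, Real.sqrt (w x) ^ 2 = w x := fun x => Real.sq_sqrt (le_of_lt (hw x))
  have hne : ∀ x, Real.sqrt (w x) ≠ 0 :=
    fun x => ne_of_gt (Real.sqrt_pos.mpr (hw x))
  have h1 : ∀ x, u x * v x = (u x / Real.sqrt (w x)) * (Real.sqrt (w x) * v x) := by
    intro x
    field_simp [hne x]
  have h2 := Finset.sum_mul_sq_le_sq_mul_sq Finset.univ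
    (fun x => u x / Real.sqrt (w x)) (fun x => Real.sqrt (w x) * v x)
  have h3 : ∑ x, (u x / Real.sqrt (w x)) ^ 2 = ∑ x, u x ^ 2 / w x := by
    refine Finset.sum_congr rfl fun x _ => ?_
    rw [div_pow, hsq]
  have h4 : ∑ x, (Real.sqrt (w x) * v x) ^ 2 = ∑ x, w x * v x ^ 2 := by
    refine Finset.sum_congr rfl fun x _ => ?_
    rw [mul_pow, hsq]
  rw [h3, h4] at h2
  have h5 : (∑ x, u x * v x) ^ 2 ≤ (∑ x, u x ^ 2 / w x) * ∑ x, w x * v x ^ 2 := by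
    calc (∑ x, u x * v x) ^ 2
        = (∑ x, (u x / Real.sqrt (w x)) * (Real.sqrt (w x) * v x)) ^ 2 := by
          rw [Finset.sum_congr rfl fun x _ => h1 x]
      _ ≤ _ := h2
  calc |∑ x, u x * v x| = Real.sqrt ((∑ x, u x * v x) ^ 2) :=
        (Real.sqrt_sq_eq_abs _).symm
    _ ≤ Real.sqrt ((∑ x, u x ^ 2 / w x) * ∑ x, w x * v x ^ 2) := Real.sqrt_le_sqrt h5
    _ = Real.sqrt (∑ x, u x ^ 2 / w x) * Real.sqrt (∑ x, w x * v x ^ 2) :=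
        Real.sqrt_mul (Finset.sum_nonneg fun x _ =>
          div_nonneg (sq_nonneg _) (le_of_lt (hw x))) _

/-- Cauchy–Schwarz with a pmf weight. -/
lemma cs_pmf {X : Type*} [Fintype X] (p f : X → ℝ) (hp : IsPMF p) :
    |∑ x, p x * f x| ≤ Real.sqrt (∑ x, p x * f x ^ 2) := by
  have hsq : ∀ x, Real.sqrt (p x) ^ 2 = p x := fun x => Real.sq_sqrt (hp.1 x)
  have h2 := Finset.sum_mul_sq_le_sq_mul_sq Finset.univ
    (fun x => Real.sqrt (p x)) (fun x => Real.sqrt (p x) * f x)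
  have h3 : ∑ x, Real.sqrt (p x) * (Real.sqrt (p x) * f x) = ∑ x, p x * f x := by
    refine Finset.sum_congr rfl fun x _ => ?_
    rw [← mul_assoc]
    congr 1
    exact Real.mul_self_sqrt (hp.1 x)
  have h4 : ∑ x, Real.sqrt (p x) ^ 2 = 1 := by
    rw [Finset.sum_congr rfl fun x _ => hsq x, hp.2]
  have h5 : ∑ x, (Real.sqrt (p x) * f x) ^ 2 = ∑ x, p x * f x ^ 2 := by
    refine Finset.sum_congr rfl fun x _ => ?_
    rw [mul_pow, hsq]
  rw [h3, h4, h5, one_mul] at h2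
  calc |∑ x, p x * f x| = Real.sqrt ((∑ x, p x * f x) ^ 2) :=
        (Real.sqrt_sq_eq_abs _).symm
    _ ≤ Real.sqrt (∑ x, p x * f x ^ 2) := Real.sqrt_le_sqrt h2


section Step2

variable [Nonempty A]

lemma occ_sum_one (hρ : IsPMF ρ) (hπ : ∀ h s, IsPMF (π h s)) (k : Fin H) :
    ∑ x : S k.castSucc × A, occ ρ (detKernel Pd) π k x.1 x.2 = 1 := by
  have h1 : ∑ x : S k.castSucc × A, occ ρ (detKernel Pd) π k x.1 x.2
      = ∑ x : S k.castSucc × A, occ ρ (detKernel Pd) π k x.1 x.2 * 1 := by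
    simp
  rw [h1, occ_pair k (fun _ _ => 1), exp_one hρ hπ]

lemma occ_nonneg (hρ : IsPMF ρ) (hπ : ∀ h s, IsPMF (π h s)) (k : Fin H)
    (x : S k.castSucc) (b : A) : 0 ≤ occ ρ (detKernel Pd) π k x b :=
  exp_nonneg' hρ.1 (fun h s c => (hπ h s).1 c) (detKernel_nonneg' Pd) _
    (fun s a => by split <;> norm_num)

/-- Decomposition of the expected residual. -/
lemma Idecomp (hH : 0 < H) (hρ : IsPMF ρ) (hπ : ∀ h s, IsPMF (π h s)) :
    expTraj ρ (detKernel Pd) π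
        (fun s a => trajResidual hH πref r β Q (fun h => s h.castSucc) a)
      = (∑ x : S 0, ρ x * Wfun Pd πref r β Q μ 0 x)
        + ∑ h : Fin H, ∑ x : S h.castSucc × A,
            occ ρ (detKernel Pd) π h x.1 x.2 * Afun Pd πref r β Q μ h x.1 x.2 := by
  have h1 : expTraj ρ (detKernel Pd) π
      (fun s a => trajResidual hH πref r β Q (fun h => s h.castSucc) a)
      = expTraj ρ (detKernel Pd) π
          (fun s a => Wfun Pd πref r β Q μ 0 (s 0)
            + ∑ h : Fin H, Afun Pd πref r β Q μ h (s h.castSucc) (a h)) := by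
    refine exp_congr' fun s a hD => ?_
    obtain ⟨adm, _⟩ := density_support (fun h x b => (hπ h x).1 b) s a hD
    exact trajRes_WA hH s a adm
  rw [h1, exp_add', exp_first hπ (Wfun Pd πref r β Q μ 0),
    exp_sum' Finset.univ (fun h s a => Afun Pd πref r β Q μ h (s h.castSucc) (a h))]
  congr 1
  exact Finset.sum_congr rfl fun h _ => (occ_pair h (Afun Pd πref r β Q μ h)).symm

/-- The occupancy of `μ` is orthogonal to the martingale increments. -/
lemma muA_zero (hμ : ∀ h s, IsPMF (μ h s)) (k : Fin H) :
    ∑ x : S k.castSucc × A, occ ρ (detKernel Pd) μ k x.1 x.2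
        * Afun Pd πref r β Q μ k x.1 x.2 = 0 := by
  rw [occ_pair k (Afun Pd πref r β Q μ k)]
  have hfn : (fun (s : ∀ i : Fin (H+1), S i) (a : Fin H → A) =>
      Afun Pd πref r β Q μ k (s k.castSucc) (a k))
      = (fun s a => (1:ℝ) * Afun Pd πref r β Q μ k (s k.castSucc) (a k)) := by
    funext s a; ring
  rw [hfn]
  exact exp_cond_eq_zero₁ hμ k (fun _ => 1) (Afun Pd πref r β Q μ k)
    (fun x => Afun_mean hμ k x)

/-- Second-moment decomposition of the trajectory residual under `μ`. -/
lemma Mdecomp (hH : 0 < H) (hρ : IsPMF ρ) (hμ : ∀ h s, IsPMF (μ h s)) :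
    expTraj ρ (detKernel Pd) μ
        (fun s a => (trajResidual hH πref r β Q (fun h => s h.castSucc) a) ^ 2)
      = (∑ x : S 0, ρ x * Wfun Pd πref r β Q μ 0 x ^ 2)
        + ∑ h : Fin H, ∑ x : S h.castSucc × A,
            occ ρ (detKernel Pd) μ h x.1 x.2 * Afun Pd πref r β Q μ h x.1 x.2 ^ 2 := by
  have h1 : expTraj ρ (detKernel Pd) μ
      (fun s a => (trajResidual hH πref r β Q (fun h => s h.castSucc) a) ^ 2)
      = expTraj ρ (detKernel Pd) μ
          (fun s a => Wfun Pd πref r β Q μ 0 (s 0) ^ 2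
            + 2 * ∑ h : Fin H,
                (Wfun Pd πref r β Q μ 0 (s 0) * Afun Pd πref r β Q μ h (s h.castSucc) (a h))
            + ∑ h : Fin H, ∑ k : Fin H,
                (Afun Pd πref r β Q μ h (s h.castSucc) (a h)
                  * Afun Pd πref r β Q μ k (s k.castSucc) (a k))) := by
    refine exp_congr' fun s a hD => ?_
    obtain ⟨adm, _⟩ := density_support (fun h x b => (hμ h x).1 b) s a hD
    rw [trajRes_WA hH s a adm]
    set x0 := Wfun Pd πref r β Q μ 0 (s 0)
    set Y := fun h : Fin H => Afun Pd πref r β Q μ h (s h.castSucc) (a h)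
    have e1 : ∑ h : Fin H, (x0 * Y h) = x0 * ∑ h : Fin H, Y h := by
      rw [Finset.mul_sum]
    have e2 : ∑ h : Fin H, ∑ k : Fin H, (Y h * Y k)
        = (∑ h : Fin H, Y h) * ∑ k : Fin H, Y k := by
      rw [Finset.sum_mul_sum]
    rw [e1, e2]
    ring
  rw [h1, exp_add', exp_add', exp_cmul',
    exp_first hμ (fun x => Wfun Pd πref r β Q μ 0 x ^ 2),
    exp_sum' Finset.univ (fun h s a => Wfun Pd πref r β Q μ 0 (s 0)
      * Afun Pd πref r β Q μ h (s h.castSucc) (a h)),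
    exp_sum' Finset.univ (fun h s a => ∑ k : Fin H,
      (Afun Pd πref r β Q μ h (s h.castSucc) (a h)
        * Afun Pd πref r β Q μ k (s k.castSucc) (a k)))]
  have hcross : ∀ h : Fin H, expTraj ρ (detKernel Pd) μ
      (fun s a => Wfun Pd πref r β Q μ 0 (s 0)
        * Afun Pd πref r β Q μ h (s h.castSucc) (a h)) = 0 :=
    fun h => exp_cond_eq_zero₁ hμ h (Wfun Pd πref r β Q μ 0)
      (Afun Pd πref r β Q μ h) (fun x => Afun_mean hμ h x)
  have hdiag : ∀ h : Fin H, expTraj ρ (detKernel Pd) μ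
      (fun s a => ∑ k : Fin H, (Afun Pd πref r β Q μ h (s h.castSucc) (a h)
        * Afun Pd πref r β Q μ k (s k.castSucc) (a k)))
      = ∑ x : S h.castSucc × A,
          occ ρ (detKernel Pd) μ h x.1 x.2 * Afun Pd πref r β Q μ h x.1 x.2 ^ 2 := by
    intro h
    rw [exp_sum' Finset.univ (fun k s a => Afun Pd πref r β Q μ h (s h.castSucc) (a h)
      * Afun Pd πref r β Q μ k (s k.castSucc) (a k))]
    have hoff : ∀ k : Fin H, k ≠ h → expTraj ρ (detKernel Pd) μ
        (fun s a => Afun Pd πref r β Q μ h (s h.castSucc) (a h)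
          * Afun Pd πref r β Q μ k (s k.castSucc) (a k)) = 0 := by
      intro k hk
      rcases lt_or_gt_of_ne (fun hc => hk (Fin.ext hc) :
          (k : ℕ) ≠ (h : ℕ)) with hlt | hgt
      · -- k < h : ψ₁ at k, ψ₂ at h
        have hfn : (fun (s : ∀ i : Fin (H+1), S i) (a : Fin H → A) =>
            Afun Pd πref r β Q μ h (s h.castSucc) (a h)
              * Afun Pd πref r β Q μ k (s k.castSucc) (a k))
            = (fun s a => Afun Pd πref r β Q μ k (s k.castSucc) (a k)
                * Afun Pd πref r β Q μ h (s h.castSucc) (a h)) := by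
          funext s a; ring
        rw [hfn]
        exact exp_cond_eq_zero₂ hμ k h hlt (Afun Pd πref r β Q μ k)
          (Afun Pd πref r β Q μ h) (fun x => Afun_mean hμ h x)
      · exact exp_cond_eq_zero₂ hμ h k hgt (Afun Pd πref r β Q μ h)
          (Afun Pd πref r β Q μ k) (fun x => Afun_mean hμ k x)
    rw [Finset.sum_eq_single h (fun k _ hk => hoff k hk)
      (fun hc => absurd (Finset.mem_univ h) hc)]
    have hsq : (fun (s : ∀ i : Fin (H+1), S i) (a : Fin H → A) =>
        Afun Pd πref r β Q μ h (s h.castSucc) (a h)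
          * Afun Pd πref r β Q μ h (s h.castSucc) (a h))
        = (fun s a => (fun (x : S h.castSucc) (b : A) =>
            Afun Pd πref r β Q μ h x b ^ 2) (s h.castSucc) (a h)) := by
      funext s a; ring
    rw [hsq, ← occ_pair h (fun x b => Afun Pd πref r β Q μ h x b ^ 2)]
  rw [Finset.sum_congr rfl fun h _ => hcross h,
    Finset.sum_congr rfl fun h _ => hdiag h]
  simp


lemma cs_plain {X : Type*} [Fintype X] (f g : X → ℝ) (hf : ∀ x, 0 ≤ f x)
    (hg : ∀ x, 0 ≤ g x) :
    ∑ x, f x * g x ≤ Real.sqrt (∑ x, f x ^ 2) * Real.sqrt (∑ x, g x ^ 2) := by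
  have h2 := Finset.sum_mul_sq_le_sq_mul_sq Finset.univ f g
  calc ∑ x, f x * g x = Real.sqrt ((∑ x, f x * g x) ^ 2) := by
        rw [Real.sqrt_sq (Finset.sum_nonneg fun x _ => mul_nonneg (hf x) (hg x))]
    _ ≤ Real.sqrt ((∑ x, f x ^ 2) * ∑ x, g x ^ 2) := Real.sqrt_le_sqrt h2
    _ = _ := Real.sqrt_mul (Finset.sum_nonneg fun x _ => sq_nonneg _) _

set_option maxHeartbeats 1000000 in
/-- Step 2: the expected residual is controlled by the χ²-weighted root mean square. -/
lemma step2 (hH : 0 < H) (hρ : IsPMF ρ) (hμ : ∀ h s, IsPMF (μ h s))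
    (hsupp : ∀ (k : Fin H) (x : S k.castSucc) (b : A),
      0 < occ ρ (detKernel Pd) μ k x b)
    (hπ : ∀ h s, IsPMF (π h s)) :
    |expTraj ρ (detKernel Pd) π
        (fun s a => trajResidual hH πref r β Q (fun h => s h.castSucc) a)|
      ≤ Real.sqrt ((1 + ∑ h : Fin H,
            chiSq (fun x : S h.castSucc × A => occ ρ (detKernel Pd) π h x.1 x.2)
              (fun x : S h.castSucc × A => occ ρ (detKernel Pd) μ h x.1 x.2))
          * expTraj ρ (detKernel Pd) μ
              (fun s a => (trajResidual hH πref r β Q (fun h => s h.castSucc) a) ^ 2)) := by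
  set U : Fin (H + 1) → ℝ := Fin.cases
    (Real.sqrt (∑ x : S 0, ρ x * Wfun Pd πref r β Q μ 0 x ^ 2))
    (fun h => Real.sqrt (∑ x : S h.castSucc × A,
      occ ρ (detKernel Pd) μ h x.1 x.2 * Afun Pd πref r β Q μ h x.1 x.2 ^ 2)) with hU
  set V : Fin (H + 1) → ℝ := Fin.cases 1
    (fun h => Real.sqrt (chiSq
      (fun x : S h.castSucc × A => occ ρ (detKernel Pd) π h x.1 x.2)
      (fun x : S h.castSucc × A => occ ρ (detKernel Pd) μ h x.1 x.2))) with hV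
  have hU0 : ∀ i, 0 ≤ U i := by
    intro i
    induction i using Fin.cases <;> simp [hU] <;> exact Real.sqrt_nonneg _
  have hV0 : ∀ i, 0 ≤ V i := by
    intro i
    induction i using Fin.cases <;> simp [hV] <;> exact Real.sqrt_nonneg _
  -- step A : |E_π F| ≤ ∑ i, V i * U i
  have hV0e : V 0 = 1 := rfl
  have hU0e : U 0 = Real.sqrt (∑ x : S 0, ρ x * Wfun Pd πref r β Q μ 0 x ^ 2) := rfl
  have hVse : ∀ h : Fin H, V h.succ = Real.sqrt (chiSq
      (fun x : S h.castSucc × A => occ ρ (detKernel Pd) π h x.1 x.2)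
      (fun x : S h.castSucc × A => occ ρ (detKernel Pd) μ h x.1 x.2)) :=
    fun h => by rw [hV]; exact Fin.cases_succ h
  have hUse : ∀ h : Fin H, U h.succ = Real.sqrt (∑ x : S h.castSucc × A,
      occ ρ (detKernel Pd) μ h x.1 x.2 * Afun Pd πref r β Q μ h x.1 x.2 ^ 2) :=
    fun h => by rw [hU]; exact Fin.cases_succ h
  have hA : |expTraj ρ (detKernel Pd) π
      (fun s a => trajResidual hH πref r β Q (fun h => s h.castSucc) a)|
      ≤ ∑ i : Fin (H + 1), V i * U i := by
    rw [Idecomp hH hρ hπ]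
    have hsub : ∀ h : Fin H, ∑ x : S h.castSucc × A,
        occ ρ (detKernel Pd) π h x.1 x.2 * Afun Pd πref r β Q μ h x.1 x.2
        = ∑ x : S h.castSucc × A,
            (occ ρ (detKernel Pd) π h x.1 x.2 - occ ρ (detKernel Pd) μ h x.1 x.2)
              * Afun Pd πref r β Q μ h x.1 x.2 := by
      intro h
      have hz := muA_zero (ρ := ρ) (Pd := Pd) (πref := πref) (r := r) (β := β) (Q := Q)
        hμ h
      have he : ∀ x ∈ (Finset.univ : Finset (S h.castSucc × A)),
          (occ ρ (detKernel Pd) π h x.1 x.2 - occ ρ (detKernel Pd) μ h x.1 x.2)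
            * Afun Pd πref r β Q μ h x.1 x.2
          = occ ρ (detKernel Pd) π h x.1 x.2 * Afun Pd πref r β Q μ h x.1 x.2
            - occ ρ (detKernel Pd) μ h x.1 x.2 * Afun Pd πref r β Q μ h x.1 x.2 :=
        fun x _ => by ring
      rw [Finset.sum_congr rfl he, Finset.sum_sub_distrib, hz, sub_zero]
    rw [Finset.sum_congr rfl fun h _ => hsub h]
    have b0 : |∑ x : S 0, ρ x * Wfun Pd πref r β Q μ 0 x| ≤ V 0 * U 0 := by
      rw [hV0e, hU0e, one_mul]
      exact cs_pmf ρ (Wfun Pd πref r β Q μ 0) hρ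
    have bh : ∀ h : Fin H, |∑ x : S h.castSucc × A,
        (occ ρ (detKernel Pd) π h x.1 x.2 - occ ρ (detKernel Pd) μ h x.1 x.2)
          * Afun Pd πref r β Q μ h x.1 x.2| ≤ V h.succ * U h.succ := by
      intro h
      rw [hVse h, hUse h]
      have hcs := cs_weighted
        (fun x : S h.castSucc × A =>
          occ ρ (detKernel Pd) π h x.1 x.2 - occ ρ (detKernel Pd) μ h x.1 x.2)
        (fun x : S h.castSucc × A => Afun Pd πref r β Q μ h x.1 x.2)
        (fun x : S h.castSucc × A => occ ρ (detKernel Pd) μ h x.1 x.2)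
        (fun x => hsupp h x.1 x.2)
      have hchi : (∑ x : S h.castSucc × A,
          (occ ρ (detKernel Pd) π h x.1 x.2 - occ ρ (detKernel Pd) μ h x.1 x.2) ^ 2
            / occ ρ (detKernel Pd) μ h x.1 x.2)
          = chiSq
              (fun x : S h.castSucc × A => occ ρ (detKernel Pd) π h x.1 x.2)
              (fun x : S h.castSucc × A => occ ρ (detKernel Pd) μ h x.1 x.2) :=
        (chiSq_eq
          (fun x : S h.castSucc × A => occ ρ (detKernel Pd) π h x.1 x.2)
          (fun x : S h.castSucc × A => occ ρ (detKernel Pd) μ h x.1 x.2)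
          (fun x => hsupp h x.1 x.2)
          (occ_sum_one hρ hπ h) (occ_sum_one hρ hμ h)).symm
      rw [hchi] at hcs
      exact hcs
    calc |(∑ x : S 0, ρ x * Wfun Pd πref r β Q μ 0 x)
        + ∑ h : Fin H, ∑ x : S h.castSucc × A,
            (occ ρ (detKernel Pd) π h x.1 x.2 - occ ρ (detKernel Pd) μ h x.1 x.2)
              * Afun Pd πref r β Q μ h x.1 x.2|
        ≤ |∑ x : S 0, ρ x * Wfun Pd πref r β Q μ 0 x|
          + |∑ h : Fin H, ∑ x : S h.castSucc × A,
              (occ ρ (detKernel Pd) π h x.1 x.2 - occ ρ (detKernel Pd) μ h x.1 x.2)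
                * Afun Pd πref r β Q μ h x.1 x.2| := abs_add_le _ _
      _ ≤ |∑ x : S 0, ρ x * Wfun Pd πref r β Q μ 0 x|
          + ∑ h : Fin H, |∑ x : S h.castSucc × A,
              (occ ρ (detKernel Pd) π h x.1 x.2 - occ ρ (detKernel Pd) μ h x.1 x.2)
                * Afun Pd πref r β Q μ h x.1 x.2| := by
          have := Finset.abs_sum_le_sum_abs
            (fun h : Fin H => ∑ x : S h.castSucc × A,
              (occ ρ (detKernel Pd) π h x.1 x.2 - occ ρ (detKernel Pd) μ h x.1 x.2)
                * Afun Pd πref r β Q μ h x.1 x.2) Finset.univ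
          linarith
      _ ≤ V 0 * U 0 + ∑ h : Fin H, V h.succ * U h.succ :=
          add_le_add b0 (Finset.sum_le_sum fun h _ => bh h)
      _ = ∑ i : Fin (H + 1), V i * U i :=
          (Fin.sum_univ_succ (f := fun i => V i * U i)).symm
  -- step B : ∑ i, V i * U i ≤ √(∑ V²) * √(∑ U²), and identification of the two sums
  have hB := cs_plain V U hV0 hU0
  have hVsum : ∑ i : Fin (H + 1), V i ^ 2
      = 1 + ∑ h : Fin H,
          chiSq (fun x : S h.castSucc × A => occ ρ (detKernel Pd) π h x.1 x.2)
            (fun x : S h.castSucc × A => occ ρ (detKernel Pd) μ h x.1 x.2) := by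
    rw [Fin.sum_univ_succ (f := fun i => V i ^ 2)]
    congr 1
    · simp [hV]
    · refine Finset.sum_congr rfl fun h _ => ?_
      simp only [hV, Fin.cases_succ]
      exact Real.sq_sqrt (chiSq_nonneg _ _ (fun x => hsupp h x.1 x.2)
        (occ_sum_one hρ hπ h) (occ_sum_one hρ hμ h))
  have hUsum : ∑ i : Fin (H + 1), U i ^ 2
      = expTraj ρ (detKernel Pd) μ
          (fun s a => (trajResidual hH πref r β Q (fun h => s h.castSucc) a) ^ 2) := by
    rw [Fin.sum_univ_succ (f := fun i => U i ^ 2), Mdecomp hH hρ hμ]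
    congr 1
    · simp only [hU, Fin.cases_zero]
      exact Real.sq_sqrt (Finset.sum_nonneg fun x _ =>
        mul_nonneg (hρ.1 x) (sq_nonneg _))
    · refine Finset.sum_congr rfl fun h _ => ?_
      simp only [hU, Fin.cases_succ]
      exact Real.sq_sqrt (Finset.sum_nonneg fun x _ =>
        mul_nonneg (le_of_lt (hsupp h x.1 x.2)) (sq_nonneg _))
  rw [hVsum, hUsum] at hB
  have h1 : (0:ℝ) ≤ 1 + ∑ h : Fin H,
      chiSq (fun x : S h.castSucc × A => occ ρ (detKernel Pd) π h x.1 x.2)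
        (fun x : S h.castSucc × A => occ ρ (detKernel Pd) μ h x.1 x.2) := by
    have := fun (h : Fin H) => chiSq_nonneg
      (fun x : S h.castSucc × A => occ ρ (detKernel Pd) π h x.1 x.2)
      (fun x : S h.castSucc × A => occ ρ (detKernel Pd) μ h x.1 x.2)
      (fun x => hsupp h x.1 x.2) (occ_sum_one hρ hπ h) (occ_sum_one hρ hμ h)
    have h2 : (0:ℝ) ≤ ∑ h : Fin H,
        chiSq (fun x : S h.castSucc × A => occ ρ (detKernel Pd) π h x.1 x.2)
          (fun x : S h.castSucc × A => occ ρ (detKernel Pd) μ h x.1 x.2) :=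
      Finset.sum_nonneg fun h _ => this h
    linarith
  rw [Real.sqrt_mul h1] at *
  exact le_trans hA hB

end Step2

end TBRMCore


/-- **Population-level TBRM guarantee (deterministic core of the main theorem).** In a
deterministic MDP, for any behavior policy `μ` with full-support occupancy measures, any
`Q` with softmax policy `π̂ := π_Q`, and any comparator policy `π†`,
`J_β(π†) − J_β(π̂) ≤ 2β · max_{π∈{π†,π̂}} √((1 + Σ_h χ²(d_h^π‖d_h^μ)) · E_μ[f_Q(τ)²])`. -/
theorem tbrm_population_guarantee
    (hH : 0 < H) [∀ i, Nonempty (S i)] [Nonempty A]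
    (ρ : S 0 → ℝ) (hρ : IsPMF ρ)
    (Pd : ∀ h : Fin H, S h.castSucc → A → S h.succ)
    (r : ∀ h : Fin H, S h.castSucc → A → ℝ)
    (πref : ∀ h : Fin H, S h.castSucc → A → ℝ)
    (hπref : ∀ h s, IsPMF (πref h s)) (hπrefpos : ∀ h s a, 0 < πref h s a)
    (β : ℝ) (hβ : 0 < β)
    (μ : ∀ h : Fin H, S h.castSucc → A → ℝ) (hμ : ∀ h s, IsPMF (μ h s))
    (hsupp : ∀ (h : Fin H) (s : S h.castSucc) (a : A),
      0 < occ ρ (detKernel Pd) μ h s a)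
    (Q : ∀ h : Fin H, S h.castSucc → A → ℝ)
    (πdag : ∀ h : Fin H, S h.castSucc → A → ℝ)
    (hπdag : ∀ h s, IsPMF (πdag h s)) :
    KLret ρ (detKernel Pd) πref r β πdag
        - KLret ρ (detKernel Pd) πref r β (softmaxPolicy Q) ≤
      2 * β * max
        (Real.sqrt
          ((1 + ∑ h : Fin H,
              chiSq (fun x : S h.castSucc × A => occ ρ (detKernel Pd) πdag h x.1 x.2)
                    (fun x : S h.castSucc × A => occ ρ (detKernel Pd) μ h x.1 x.2)) *
            expTraj ρ (detKernel Pd) μ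
              (fun s a => (trajResidual hH πref r β Q (fun h => s h.castSucc) a) ^ 2)))
        (Real.sqrt
          ((1 + ∑ h : Fin H,
              chiSq (fun x : S h.castSucc × A =>
                      occ ρ (detKernel Pd) (softmaxPolicy Q) h x.1 x.2)
                    (fun x : S h.castSucc × A => occ ρ (detKernel Pd) μ h x.1 x.2)) *
            expTraj ρ (detKernel Pd) μ
              (fun s a => (trajResidual hH πref r β Q (fun h => s h.castSucc) a) ^ 2))) := by

  have hπhat : ∀ h s, IsPMF (softmaxPolicy Q h s) := fun h s => softmax_pmf h s
  have h1 := step1_le (ρ := ρ) (Pd := Pd) (Q := Q) (πref := πref) (r := r)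
    hH hρ hβ hπrefpos πdag hπdag
  have h2 := step1_eq (ρ := ρ) (Pd := Pd) (Q := Q) (πref := πref) (r := r)
    hH hβ hπrefpos
  have h3 := step2 (ρ := ρ) (Pd := Pd) (πref := πref) (r := r) (β := β) (Q := Q)
    (μ := μ) (π := πdag) hH hρ hμ hsupp hπdag
  have h4 := step2 (ρ := ρ) (Pd := Pd) (πref := πref) (r := r) (β := β) (Q := Q)
    (μ := μ) (π := softmaxPolicy Q) hH hρ hμ hsupp hπhat
  set Vb := ∑ x : S 0, ρ x * VQ Q 0 x with hVb
  set Id := expTraj ρ (detKernel Pd) πdag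
    (fun s a => trajResidual hH πref r β Q (fun h => s h.castSucc) a) with hId
  set Ih := expTraj ρ (detKernel Pd) (softmaxPolicy Q)
    (fun s a => trajResidual hH πref r β Q (fun h => s h.castSucc) a) with hIh
  set T1 := Real.sqrt
    ((1 + ∑ h : Fin H,
        chiSq (fun x : S h.castSucc × A => occ ρ (detKernel Pd) πdag h x.1 x.2)
              (fun x : S h.castSucc × A => occ ρ (detKernel Pd) μ h x.1 x.2)) *
      expTraj ρ (detKernel Pd) μ
        (fun s a => (trajResidual hH πref r β Q (fun h => s h.castSucc) a) ^ 2)) with hT1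
  set T2 := Real.sqrt
    ((1 + ∑ h : Fin H,
        chiSq (fun x : S h.castSucc × A =>
                occ ρ (detKernel Pd) (softmaxPolicy Q) h x.1 x.2)
              (fun x : S h.castSucc × A => occ ρ (detKernel Pd) μ h x.1 x.2)) *
      expTraj ρ (detKernel Pd) μ
        (fun s a => (trajResidual hH πref r β Q (fun h => s h.castSucc) a) ^ 2)) with hT2
  have e : β * (Vb - Id) - β * (Vb - Ih) = β * Ih + β * (-Id) := by ring
  have m1 : β * |Ih| ≤ β * T2 := mul_le_mul_of_nonneg_left h4 (le_of_lt hβ)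
  have m2 : β * |Id| ≤ β * T1 := mul_le_mul_of_nonneg_left h3 (le_of_lt hβ)
  have m3 : β * T1 ≤ β * max T1 T2 :=
    mul_le_mul_of_nonneg_left (le_max_left _ _) (le_of_lt hβ)
  have m4 : β * T2 ≤ β * max T1 T2 :=
    mul_le_mul_of_nonneg_left (le_max_right _ _) (le_of_lt hβ)
  have a1 : β * Ih ≤ β * |Ih| :=
    mul_le_mul_of_nonneg_left (le_abs_self _) (le_of_lt hβ)
  have a2 : β * (-Id) ≤ β * |Id| :=
    mul_le_mul_of_nonneg_left (neg_le_abs _) (le_of_lt hβ)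
  linarith


end TBRM
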